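/- arXiv:2603.20826 — 5 statements merged into one kernel-verified Lean document; each statement's English description precedes it below -/
import Mathlib

section
/- Let V be a real Hilbert space, λ > 0, and consider T rounds of the CoRectron algorithm: A_0 = λI, ζ_0 = 0, and for each t = 1,…,T, ŵ_t = -A_{t-1}^{-1}ζ_{t-1}; the learner is given a nonempty set X_t ⊆ V, picks x̂_t ∈ X_t satisfying ⟨ŵ_t, x̂_t⟩ ≥ ⟨ŵ_t, x⟩ for all x ∈ X_t, observes x_t ∈ X_t, sets g_t = x̂_t - x_t, and updates A_t = A_{t-1} + g_t ⊗ g_t, ζ_t = ζ_{t-1} + g_t. Then for every u ∈ V, the regret R_T(u) = Σ_{t=1}^T ⟨u, x_t - x̂_t⟩ = -⟨u, ζ_T⟩ satisfies R_T(u) ≤ ‖u‖_{A_T} · √(log det(I_T + λ^{-1} K_T)). -/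
open scoped RealInnerProductSpace

/-- The rank-one operator `a ⊗ a : v ↦ ⟪a, v⟫ • a` on a real inner product space. -/
noncomputable def rankOne {V : Type*} [NormedAddCommGroup V] [InnerProductSpace ℝ V]
    (a : V) : V →L[ℝ] V :=
  (innerSL ℝ a).smulRight a

open Matrix

section CoRectron
variable {V : Type*} [NormedAddCommGroup V] [InnerProductSpace ℝ V]

lemma rankOne_apply (a v : V) : rankOne a v = ⟪a, v⟫ • a := rfl

variable (lam : ℝ) (g : ℕ → V)

noncomputable def Smap (n : ℕ) : V →L[ℝ] V :=
  lam • (1 : V →L[ℝ] V) + ∑ i ∈ Finset.range n, rankOne (g i)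

lemma Smap_apply (n : ℕ) (v : V) :
    Smap lam g n v = lam • v + ∑ i ∈ Finset.range n, ⟪g i, v⟫ • g i := by
  simp [Smap, ContinuousLinearMap.sum_apply, rankOne_apply]

lemma Smap_symm (n : ℕ) (v w : V) : ⟪Smap lam g n v, w⟫ = ⟪v, Smap lam g n w⟫ := by
  simp only [Smap_apply, inner_add_left, inner_add_right, real_inner_smul_left,
    real_inner_smul_right, sum_inner, inner_sum]
  congr 1
  exact Finset.sum_congr rfl (fun i _ => by rw [real_inner_comm v (g i)]; ring)

lemma Smap_coercive (hlam : 0 < lam) (n : ℕ) (v : V) :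
    lam * ‖v‖ ^ 2 ≤ ⟪v, Smap lam g n v⟫ := by
  rw [Smap_apply, inner_add_right, real_inner_smul_right, real_inner_self_eq_norm_sq]
  have : (0:ℝ) ≤ ∑ i ∈ Finset.range n, ⟪v, ⟪g i, v⟫ • g i⟫ := by
    apply Finset.sum_nonneg
    intro i _
    rw [real_inner_smul_right, real_inner_comm]
    exact mul_self_nonneg _
  rw [inner_sum]
  nlinarith

lemma Smap_inj (hlam : 0 < lam) (n : ℕ) : Function.Injective (Smap lam g n) := by
  intro a b hab
  have h : Smap lam g n (a - b) = 0 := by rw [map_sub, hab, sub_self]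
  have := Smap_coercive lam g hlam n (a - b)
  rw [h, inner_zero_right] at this
  have : a - b = 0 := by
    by_contra hne
    have hpos : 0 < ‖a - b‖ := norm_pos_iff.mpr hne
    nlinarith [pow_pos hpos 2]
  exact sub_eq_zero.mp this

noncomputable def Gram (n : ℕ) : Matrix (Fin n) (Fin n) ℝ :=
  Matrix.of fun i j => ⟪g i, g j⟫

noncomputable def Mmat (n : ℕ) : Matrix (Fin n) (Fin n) ℝ :=
  1 + lam⁻¹ • Gram g n

lemma gram_quad (n : ℕ) (x : Fin n → ℝ) :
    x ⬝ᵥ (Gram g n *ᵥ x) = ⟪∑ i, x i • g i, ∑ j, x j • g j⟫ := by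
  simp only [dotProduct, Matrix.mulVec, Gram, Matrix.of_apply, sum_inner, inner_sum,
    real_inner_smul_left, real_inner_smul_right, Finset.mul_sum]
  exact Finset.sum_congr rfl fun i _ => Finset.sum_congr rfl fun j _ => by
    rw [real_inner_comm]; ring

lemma mmat_posdef (hlam : 0 < lam) (n : ℕ) : (Mmat lam g n).PosDef := by
  rw [Matrix.posDef_iff_dotProduct_mulVec]
  constructor
  · ext i j
    simp [Mmat, Gram, Matrix.conjTranspose_apply, Matrix.one_apply, real_inner_comm (g i.1) (g j.1)]
    rcases eq_or_ne i j with h | h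
    · simp [h]
    · simp [h, Ne.symm h, real_inner_comm (g i.1) (g j.1)]
  · intro x hx
    have h1 : star x ⬝ᵥ (Mmat lam g n *ᵥ x) = x ⬝ᵥ x + lam⁻¹ * (x ⬝ᵥ (Gram g n *ᵥ x)) := by
      simp [Mmat, Matrix.add_mulVec, Matrix.one_mulVec, Matrix.smul_mulVec,
        dotProduct_add, dotProduct_smul, smul_eq_mul]
    have h2 : (0:ℝ) ≤ x ⬝ᵥ (Gram g n *ᵥ x) := by
      rw [gram_quad]; exact real_inner_self_nonneg
    have h3 : 0 < x ⬝ᵥ x := by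
      obtain ⟨i, hi⟩ := Function.ne_iff.mp hx
      have : (0:ℝ) < x i * x i := mul_self_pos.mpr hi
      exact Finset.sum_pos' (fun j _ => mul_self_nonneg _) ⟨i, Finset.mem_univ i, this⟩
    rw [h1]
    have : 0 ≤ lam⁻¹ := le_of_lt (by positivity)
    nlinarith

lemma mmat_det_isUnit (hlam : 0 < lam) (n : ℕ) : IsUnit (Mmat lam g n).det :=
  isUnit_iff_ne_zero.mpr (ne_of_gt (mmat_posdef lam g hlam n).det_pos)

noncomputable def Finv (n : ℕ) : V →L[ℝ] V :=
  lam⁻¹ • ((1 : V →L[ℝ] V) -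
    ∑ i : Fin n, ∑ j : Fin n, (((Mmat lam g n)⁻¹ i j) * lam⁻¹) • (innerSL ℝ (g j)).smulRight (g i))

lemma Finv_apply (n : ℕ) (x : V) :
    Finv lam g n x = lam⁻¹ •
      (x - ∑ i : Fin n, ((Mmat lam g n)⁻¹ *ᵥ (fun j => lam⁻¹ * ⟪g j, x⟫)) i • g i) := by
  simp only [Finv, ContinuousLinearMap.smul_apply, ContinuousLinearMap.sub_apply,
    ContinuousLinearMap.one_apply, ContinuousLinearMap.sum_apply,
    ContinuousLinearMap.smulRight_apply, innerSL_apply_apply, Matrix.mulVec, dotProduct]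
  congr 2
  refine Finset.sum_congr rfl fun i _ => ?_
  rw [Finset.sum_smul]
  refine Finset.sum_congr rfl fun j _ => ?_
  rw [smul_smul, mul_assoc]

lemma Smap_Finv (hlam : 0 < lam) (n : ℕ) (x : V) :
    Smap lam g n (Finv lam g n x) = x := by
  have hdet := mmat_det_isUnit lam g hlam n
  set k : Fin n → ℝ := fun j => lam⁻¹ * ⟪g ↑j, x⟫ with hk
  set c : Fin n → ℝ := (Mmat lam g n)⁻¹ *ᵥ k with hc
  have hMc : (Mmat lam g n) *ᵥ c = k := by
    rw [hc, Matrix.mulVec_mulVec, Matrix.mul_nonsing_inv _ hdet, Matrix.one_mulVec]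
  have hci : ∀ i : Fin n, c i + lam⁻¹ * ∑ j : Fin n, ⟪g ↑i, g ↑j⟫ * c j = k i := by
    intro i
    have h := congrFun hMc i
    simp only [Mmat, Matrix.add_mulVec, Matrix.one_mulVec, Matrix.smul_mulVec,
      Pi.add_apply, Pi.smul_apply, smul_eq_mul] at h
    have h2 : (Gram g n *ᵥ c) i = ∑ j : Fin n, ⟪g ↑i, g ↑j⟫ * c j := by
      simp [Matrix.mulVec, dotProduct, Gram]
    rw [h2] at h
    exact h
  set y := Finv lam g n x with hy
  have hyv : y = lam⁻¹ • (x - ∑ i : Fin n, c i • g ↑i) := Finv_apply lam g n x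
  have hlamy : lam • y = x - ∑ i : Fin n, c i • g ↑i := by
    rw [hyv, smul_smul, mul_inv_cancel₀ (ne_of_gt hlam), one_smul]
  have hgy : ∀ i : Fin n, ⟪g ↑i, y⟫ = c i := by
    intro i
    have hsum : ⟪g ↑i, (∑ j : Fin n, c j • g ↑j : V)⟫ = ∑ j : Fin n, ⟪g ↑i, g ↑j⟫ * c j := by
      rw [inner_sum]
      exact Finset.sum_congr rfl fun j _ => by rw [real_inner_smul_right]; ring
    rw [hyv, real_inner_smul_right, inner_sub_right, hsum]
    linear_combination (-1 : ℝ) * hci i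
  rw [Smap_apply, ← Fin.sum_univ_eq_sum_range (fun i => (⟪g i, y⟫ • g i : V)) n, hlamy]
  have hsum2 : ∑ i : Fin n, (⟪g ↑i, y⟫ • g ↑i : V) = ∑ i : Fin n, c i • g ↑i :=
    Finset.sum_congr rfl fun i _ => by rw [hgy i]
  rw [hsum2]
  exact sub_add_cancel _ _

lemma Finv_Smap (hlam : 0 < lam) (n : ℕ) (x : V) :
    Finv lam g n (Smap lam g n x) = x :=
  Smap_inj lam g hlam n (by rw [Smap_Finv lam g hlam n])

noncomputable def SUnit (hlam : 0 < lam) (n : ℕ) : (V →L[ℝ] V)ˣ where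
  val := Smap lam g n
  inv := Finv lam g n
  val_inv := by ext x; exact Smap_Finv lam g hlam n x
  inv_val := by ext x; exact Finv_Smap lam g hlam n x

lemma Smap_isUnit (hlam : 0 < lam) (n : ℕ) : IsUnit (Smap lam g n) :=
  ⟨SUnit lam g hlam n, rfl⟩

lemma ring_inverse_Smap (hlam : 0 < lam) (n : ℕ) :
    Ring.inverse (Smap lam g n) = Finv lam g n := by
  have : Smap lam g n = ((SUnit lam g hlam n : (V →L[ℝ] V)ˣ) : V →L[ℝ] V) := rfl
  rw [this, Ring.inverse_unit]
  rfl

lemma Finv_symm (hlam : 0 < lam) (n : ℕ) (a b : V) :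
    ⟪Finv lam g n a, b⟫ = ⟪a, Finv lam g n b⟫ := by
  conv_lhs => rw [← Smap_Finv lam g hlam n b]
  rw [← Smap_symm, Smap_Finv lam g hlam n]

lemma Finv_inner_nonneg (hlam : 0 < lam) (n : ℕ) (x : V) :
    0 ≤ ⟪x, Finv lam g n x⟫ := by
  have h2 : ⟪x, Finv lam g n x⟫ = ⟪Finv lam g n x, Smap lam g n (Finv lam g n x)⟫ := by
    rw [Smap_Finv lam g hlam n, real_inner_comm]
  rw [h2]
  have := Smap_coercive lam g hlam n (Finv lam g n x)
  nlinarith [sq_nonneg ‖Finv lam g n x‖]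

noncomputable def beta (n : ℕ) : ℝ := ⟪g n, Finv lam g n (g n)⟫

noncomputable def zeta (n : ℕ) : V := ∑ i ∈ Finset.range n, g i

noncomputable def Pfun (n : ℕ) : ℝ := ⟪zeta g n, Finv lam g n (zeta g n)⟫

lemma beta_nonneg (hlam : 0 < lam) (n : ℕ) : 0 ≤ beta lam g n :=
  Finv_inner_nonneg lam g hlam n (g n)

lemma Smap_succ (n : ℕ) : Smap lam g (n+1) = Smap lam g n + rankOne (g n) := by
  simp [Smap, Finset.sum_range_succ, add_assoc]

lemma Finv_succ (hlam : 0 < lam) (n : ℕ) :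
    Finv lam g (n+1) = Finv lam g n -
      (1 + beta lam g n)⁻¹ • (innerSL ℝ (Finv lam g n (g n))).smulRight (Finv lam g n (g n)) := by
  have hb : 0 ≤ beta lam g n := beta_nonneg lam g hlam n
  have hb1 : (1 : ℝ) + beta lam g n ≠ 0 := by linarith
  have h2 : (Finv lam g (n+1) : V →L[ℝ] V) * Smap lam g (n+1) = 1 :=
    (SUnit lam g hlam (n+1)).inv_val
  have h1 : (Smap lam g (n+1) : V →L[ℝ] V) *
      (Finv lam g n - (1 + beta lam g n)⁻¹ •
        (innerSL ℝ (Finv lam g n (g n))).smulRight (Finv lam g n (g n))) = 1 := by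
    ext v
    have e1 : ⟪g n, Finv lam g n v⟫ = ⟪Finv lam g n (g n), v⟫ :=
      (Finv_symm lam g hlam n (g n) v).symm
    simp only [ContinuousLinearMap.mul_apply, ContinuousLinearMap.sub_apply,
      ContinuousLinearMap.smul_apply, ContinuousLinearMap.smulRight_apply, innerSL_apply_apply,
      ContinuousLinearMap.one_apply]
    rw [Smap_succ, ContinuousLinearMap.add_apply, map_sub, ContinuousLinearMap.map_smul,
      ContinuousLinearMap.map_smul, Smap_Finv lam g hlam n, Smap_Finv lam g hlam n,
      rankOne_apply, inner_sub_right, real_inner_smul_right, real_inner_smul_right, e1]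
    rw [show ⟪g n, Finv lam g n (g n)⟫ = beta lam g n from rfl]
    match_scalars
    all_goals (field_simp; try ring)
  exact left_inv_eq_right_inv h2 h1

lemma beta'_eq (hlam : 0 < lam) (n : ℕ) :
    ⟪g n, Finv lam g (n+1) (g n)⟫ = beta lam g n / (1 + beta lam g n) := by
  have hb : 0 ≤ beta lam g n := beta_nonneg lam g hlam n
  have hb1 : (1 : ℝ) + beta lam g n ≠ 0 := by linarith
  rw [Finv_succ lam g hlam n]
  simp only [ContinuousLinearMap.sub_apply, ContinuousLinearMap.smul_apply,
    ContinuousLinearMap.smulRight_apply, innerSL_apply_apply]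
  rw [inner_sub_right, real_inner_smul_right, real_inner_smul_right]
  have e2 : ⟪Finv lam g n (g n), g n⟫ = beta lam g n := by rw [real_inner_comm]; rfl
  have e3 : ⟪g n, Finv lam g n (g n)⟫ = beta lam g n := rfl
  rw [e2, e3]
  field_simp
  ring

lemma zeta_succ (n : ℕ) : zeta g (n+1) = zeta g n + g n := Finset.sum_range_succ _ _

lemma Pfun_succ_le (hlam : 0 < lam) (n : ℕ)
    (halpha : ⟪g n, Finv lam g n (zeta g n)⟫ ≤ 0) :
    Pfun lam g (n+1) ≤ Pfun lam g n + ⟪g n, Finv lam g (n+1) (g n)⟫ := by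
  have hb : 0 ≤ beta lam g n := beta_nonneg lam g hlam n
  have hb1 : (0 : ℝ) < 1 + beta lam g n := by linarith
  set α := ⟪g n, Finv lam g n (zeta g n)⟫ with hα
  set β := beta lam g n with hβ
  have e3 : ⟪g n, Finv lam g n (g n)⟫ = β := rfl
  have ezf : ⟪zeta g n, Finv lam g n (g n)⟫ = α := by
    rw [← Finv_symm lam g hlam n, real_inner_comm]
  have ehz : ⟪Finv lam g n (g n), zeta g n⟫ = α := by
    rw [Finv_symm lam g hlam n]
  have ehg : ⟪Finv lam g n (g n), g n⟫ = β := by rw [real_inner_comm]; rfl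
  rw [beta'_eq lam g hlam n]
  have key : Pfun lam g (n+1) = Pfun lam g n + 2*α + β - (1+β)⁻¹ * (α+β)^2 := by
    have hF : Finv lam g (n+1) (zeta g n + g n) =
        (Finv lam g n (zeta g n) + Finv lam g n (g n)) -
          ((1+β)⁻¹ * (α+β)) • Finv lam g n (g n) := by
      rw [Finv_succ lam g hlam n]
      simp only [ContinuousLinearMap.sub_apply, ContinuousLinearMap.smul_apply,
        ContinuousLinearMap.smulRight_apply, innerSL_apply_apply, map_add, inner_add_right]
      rw [ehz, ehg]
      match_scalars <;> ring
    rw [Pfun, zeta_succ, hF]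
    rw [inner_add_left, inner_sub_right, inner_sub_right, inner_add_right, inner_add_right,
      real_inner_smul_right, real_inner_smul_right]
    have t1 : ⟪zeta g n, Finv lam g n (zeta g n)⟫ = Pfun lam g n := rfl
    have t2 : ⟪g n, Finv lam g n (zeta g n)⟫ = α := hα.symm
    rw [t1, ezf, t2, e3]
    ring
  rw [key, div_eq_mul_inv]
  have hc : (1+β)⁻¹ * (1+β) = 1 := inv_mul_cancel₀ (ne_of_gt hb1)
  have hcpos : 0 < (1+β)⁻¹ := by positivity
  have h1 : 0 ≤ (1+β)⁻¹ * (α^2 - 2*α) :=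
    mul_nonneg hcpos.le (by nlinarith)
  nlinarith [h1, hc]

lemma Pfun_zero : Pfun lam g 0 = 0 := by simp [Pfun, zeta]

lemma Pfun_le_sum (hlam : 0 < lam) (N : ℕ)
    (halpha : ∀ n < N, ⟪g n, Finv lam g n (zeta g n)⟫ ≤ 0) :
    Pfun lam g N ≤ ∑ n ∈ Finset.range N, ⟪g n, Finv lam g (n+1) (g n)⟫ := by
  induction N with
  | zero => simp [Pfun_zero]
  | succ N ih =>
    rw [Finset.sum_range_succ]
    have h1 := Pfun_succ_le lam g hlam N (halpha N (by omega))
    have h2 := ih (fun n hn => halpha n (by omega))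
    linarith

lemma betar_le_log (hlam : 0 < lam) (n : ℕ) :
    ⟪g n, Finv lam g (n+1) (g n)⟫ ≤ Real.log (1 + beta lam g n) := by
  have hb : 0 ≤ beta lam g n := beta_nonneg lam g hlam n
  have h1 : (0:ℝ) < 1 + beta lam g n := by linarith
  rw [beta'_eq lam g hlam n]
  have hlog := Real.log_le_sub_one_of_pos (show (0:ℝ) < (1 + beta lam g n)⁻¹ by positivity)
  rw [Real.log_inv] at hlog
  have he : beta lam g n / (1 + beta lam g n) = 1 - (1 + beta lam g n)⁻¹ := by
    field_simp
    ring
  linarith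

lemma beta_expand (hlam : 0 < lam) (n : ℕ) :
    beta lam g n = lam⁻¹ * ⟪g n, g n⟫ - ∑ i : Fin n, ∑ j : Fin n,
      (lam⁻¹ * ⟪g n, g ↑i⟫) * ((Mmat lam g n)⁻¹ i j * (lam⁻¹ * ⟪g ↑j, g n⟫)) := by
  rw [show beta lam g n = ⟪g n, Finv lam g n (g n)⟫ from rfl, Finv_apply,
    real_inner_smul_right, inner_sub_right, inner_sum, mul_sub, Finset.mul_sum]
  congr 1
  refine Finset.sum_congr rfl fun i _ => ?_
  rw [real_inner_smul_right]
  simp only [Matrix.mulVec, dotProduct]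
  rw [Finset.sum_mul, Finset.mul_sum]
  refine Finset.sum_congr rfl fun j _ => ?_
  ring

lemma det_Mmat (hlam : 0 < lam) (n : ℕ) :
    (Mmat lam g n).det = ∏ t ∈ Finset.range n, (1 + beta lam g t) := by
  induction n with
  | zero =>
    rw [Finset.range_zero, Finset.prod_empty]
    exact Matrix.det_fin_zero
  | succ n ih =>
    rw [Finset.prod_range_succ, ← ih]
    have hdet := mmat_det_isUnit lam g hlam n
    haveI : Invertible (Mmat lam g n) := (Mmat lam g n).invertibleOfIsUnitDet hdet
    set B : Matrix (Fin n) (Fin 1) ℝ := Matrix.of (fun i _ => lam⁻¹ * ⟪g ↑i, g n⟫) with hB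
    set C : Matrix (Fin 1) (Fin n) ℝ := Matrix.of (fun _ j => lam⁻¹ * ⟪g n, g ↑j⟫) with hC
    set D : Matrix (Fin 1) (Fin 1) ℝ := Matrix.of (fun _ _ => 1 + lam⁻¹ * ⟪g n, g n⟫) with hD
    have mmA : ∀ (m : ℕ) (a b : Fin m), Mmat lam g m a b
        = (if a = b then 1 else 0) + lam⁻¹ * ⟪g ↑a, g ↑b⟫ := by
      intro m a b
      simp [Mmat, Gram, Matrix.one_apply, Matrix.add_apply]
    have hblock : (Mmat lam g (n+1)).submatrix finSumFinEquiv finSumFinEquiv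
        = Matrix.fromBlocks (Mmat lam g n) B C D := by
      ext i j
      rcases i with i | i <;> rcases j with j | j <;>
        simp only [Matrix.submatrix_apply, finSumFinEquiv_apply_left, finSumFinEquiv_apply_right,
          Matrix.fromBlocks_apply₁₁, Matrix.fromBlocks_apply₁₂, Matrix.fromBlocks_apply₂₁,
          Matrix.fromBlocks_apply₂₂, mmA, hB, hC, hD, Matrix.of_apply, Fin.coe_castAdd,
          Fin.coe_natAdd, Fin.val_eq_zero]
      · simp [Fin.ext_iff]
      · have hij : (↑i:ℕ) ≠ n := by omega
        simp [Fin.ext_iff, hij]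
      · have hij : ¬ (n = (↑j:ℕ)) := by omega
        simp [Fin.ext_iff, hij]
      · simp [Fin.ext_iff]
    rw [← Matrix.det_submatrix_equiv_self finSumFinEquiv, hblock, Matrix.det_fromBlocks₁₁]
    congr 1
    rw [Matrix.invOf_eq_nonsing_inv, Matrix.det_fin_one, Matrix.sub_apply]
    have hs : (C * (Mmat lam g n)⁻¹ * B) 0 0 = ∑ i : Fin n, ∑ j : Fin n,
        (lam⁻¹ * ⟪g n, g ↑i⟫) * ((Mmat lam g n)⁻¹ i j * (lam⁻¹ * ⟪g ↑j, g n⟫)) := by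
      rw [Matrix.mul_apply]
      have h1 : ∀ j : Fin n, (C * (Mmat lam g n)⁻¹) 0 j * B j 0
          = ∑ i : Fin n, C 0 i * (Mmat lam g n)⁻¹ i j * B j 0 := fun j => by
        rw [Matrix.mul_apply, Finset.sum_mul]
      rw [Finset.sum_congr rfl fun j _ => h1 j, Finset.sum_comm]
      refine Finset.sum_congr rfl fun i _ => Finset.sum_congr rfl fun j _ => ?_
      simp only [hB, hC, Matrix.of_apply]
      ring
    rw [hs, beta_expand lam g hlam n]
    simp only [hD, Matrix.of_apply]
    ring

lemma Pfun_nonneg (hlam : 0 < lam) (N : ℕ) : 0 ≤ Pfun lam g N :=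
  Finv_inner_nonneg lam g hlam N _

lemma Pfun_le_logdet (hlam : 0 < lam) (N : ℕ)
    (halpha : ∀ n < N, ⟪g n, Finv lam g n (zeta g n)⟫ ≤ 0) :
    Pfun lam g N ≤ Real.log (Mmat lam g N).det := by
  have h1 := Pfun_le_sum lam g hlam N halpha
  have h2 : ∑ n ∈ Finset.range N, ⟪g n, Finv lam g (n+1) (g n)⟫
      ≤ ∑ n ∈ Finset.range N, Real.log (1 + beta lam g n) :=
    Finset.sum_le_sum fun n _ => betar_le_log lam g hlam n
  have h3 : ∑ n ∈ Finset.range N, Real.log (1 + beta lam g n)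
      = Real.log (∏ n ∈ Finset.range N, (1 + beta lam g n)) := by
    rw [Real.log_prod]
    intro n _
    have := beta_nonneg lam g hlam n
    linarith
  rw [det_Mmat lam g hlam N, ← h3]
  linarith

lemma smap_cs (hlam : 0 < lam) (n : ℕ) (u w : V) :
    ⟪u, Smap lam g n w⟫^2 ≤ ⟪u, Smap lam g n u⟫ * ⟪w, Smap lam g n w⟫ := by
  have hq : ∀ x : ℝ, 0 ≤ ⟪w, Smap lam g n w⟫ * (x*x) + (2*⟪u, Smap lam g n w⟫) * x
      + ⟪u, Smap lam g n u⟫ := by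
    intro x
    have h0 : 0 ≤ ⟪u + x • w, Smap lam g n (u + x • w)⟫ :=
      le_trans (by positivity) (Smap_coercive lam g hlam n _)
    rw [map_add, ContinuousLinearMap.map_smul, inner_add_left, inner_add_right, inner_add_right,
      real_inner_smul_left, real_inner_smul_left, real_inner_smul_right,
      real_inner_smul_right] at h0
    have hsym : ⟪w, Smap lam g n u⟫ = ⟪u, Smap lam g n w⟫ :=
      (real_inner_comm _ w).trans (Smap_symm lam g n u w)
    rw [hsym] at h0
    nlinarith [h0]
  have hd := discrim_le_zero hq
  rw [discrim] at hd
  nlinarith [hd]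

lemma main_bound (hlam : 0 < lam) (N : ℕ)
    (halpha : ∀ n < N, ⟪g n, Finv lam g n (zeta g n)⟫ ≤ 0) (u : V) :
    -⟪u, zeta g N⟫ ≤
      Real.sqrt ⟪u, Smap lam g N u⟫ * Real.sqrt (Real.log (Mmat lam g N).det) := by
  set w := -(Finv lam g N (zeta g N)) with hw
  have hSw : Smap lam g N w = -(zeta g N) := by rw [hw, map_neg, Smap_Finv lam g hlam]
  have h1 : ⟪u, Smap lam g N w⟫ = -⟪u, zeta g N⟫ := by rw [hSw, inner_neg_right]
  have h2 : ⟪w, Smap lam g N w⟫ = Pfun lam g N := by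
    rw [hSw, hw, inner_neg_left, inner_neg_right, neg_neg, Pfun, real_inner_comm]
  have hcs := smap_cs lam g hlam N u w
  rw [h1, h2] at hcs
  have hP : Pfun lam g N ≤ Real.log (Mmat lam g N).det := Pfun_le_logdet lam g hlam N halpha
  have huu : 0 ≤ ⟪u, Smap lam g N u⟫ := le_trans (by positivity) (Smap_coercive lam g hlam N u)
  calc -⟪u, zeta g N⟫ ≤ |(-⟪u, zeta g N⟫)| := le_abs_self _
    _ = Real.sqrt ((-⟪u, zeta g N⟫)^2) := (Real.sqrt_sq_eq_abs _).symm
    _ ≤ Real.sqrt (⟪u, Smap lam g N u⟫ * Real.log (Mmat lam g N).det) := by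
        apply Real.sqrt_le_sqrt
        nlinarith [mul_le_mul_of_nonneg_left hP huu]
    _ = Real.sqrt ⟪u, Smap lam g N u⟫ * Real.sqrt (Real.log (Mmat lam g N).det) :=
        Real.sqrt_mul huu _

end CoRectron

/-- Main regret bound for CoRectron: the regret `R_T(u) = Σ_t ⟪u, x_t - x̂_t⟫ = -⟪u, ζ_T⟫`
is at most `‖u‖_{A_T} √(log det (I_T + λ⁻¹ K_T))`. -/
theorem corectron_main_regret_bound
    {V : Type*} [NormedAddCommGroup V] [InnerProductSpace ℝ V] [CompleteSpace V]
    (T : ℕ) (lam : ℝ) (hlam : 0 < lam)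
    (X : Fin T → Set V) (hXne : ∀ t, (X t).Nonempty)
    (xhat xobs g : Fin T → V)
    (A : ℕ → (V →L[ℝ] V)) (ζ : ℕ → V) (what : Fin T → V)
    (hA0 : A 0 = lam • (1 : V →L[ℝ] V)) (hζ0 : ζ 0 = 0)
    (hwhat : ∀ t : Fin T, what t = -(Ring.inverse (A t)) (ζ t))
    (hxhat_mem : ∀ t, xhat t ∈ X t)
    (hxhat_opt : ∀ t : Fin T, ∀ y ∈ X t, ⟪what t, y⟫ ≤ ⟪what t, xhat t⟫)
    (hxobs_mem : ∀ t, xobs t ∈ X t)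
    (hg : ∀ t, g t = xhat t - xobs t)
    (hA : ∀ t : Fin T, A ((t : ℕ) + 1) = A t + rankOne (g t))
    (hζ : ∀ t : Fin T, ζ ((t : ℕ) + 1) = ζ t + g t)
    (u : V) (K : Matrix (Fin T) (Fin T) ℝ)
    (hK : ∀ i j, K i j = ⟪g i, g j⟫) :
    (∑ t, ⟪u, xobs t - xhat t⟫) = -⟪u, ζ T⟫ ∧
    (∑ t, ⟪u, xobs t - xhat t⟫) ≤
      Real.sqrt ⟪u, (A T) u⟫ * Real.sqrt (Real.log (1 + lam⁻¹ • K).det) := by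
  classical
  set G : ℕ → V := fun n => if h : n < T then g ⟨n, h⟩ else 0 with hG
  have hGt : ∀ t : Fin T, G (t : ℕ) = g t := by
    intro t; simp [hG, t.isLt]
  have hAZ : ∀ n, n ≤ T → A n = Smap lam G n ∧ ζ n = zeta G n := by
    intro n
    induction n with
    | zero =>
      intro _
      refine ⟨?_, ?_⟩
      · rw [hA0]; simp [Smap]
      · rw [hζ0]; simp [zeta]
    | succ n ih =>
      intro hn
      have hn' : n < T := by omega
      obtain ⟨ha, hz⟩ := ih (by omega)
      have hAn := hA ⟨n, hn'⟩
      have hzn := hζ ⟨n, hn'⟩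
      simp only [Fin.val_mk] at hAn hzn
      have hGn : G n = g ⟨n, hn'⟩ := hGt ⟨n, hn'⟩
      refine ⟨?_, ?_⟩
      · rw [hAn, Smap_succ, ha, hGn]
      · rw [hzn, zeta_succ, hz, hGn]
  obtain ⟨hAT, hzT⟩ := hAZ T le_rfl
  have halpha : ∀ n < T, ⟪G n, Finv lam G n (zeta G n)⟫ ≤ 0 := by
    intro n hn
    set t : Fin T := ⟨n, hn⟩ with ht
    obtain ⟨ha, hz⟩ := hAZ n (le_of_lt hn)
    have hwt : what t = -(Finv lam G n (zeta G n)) := by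
      have h := hwhat t
      simp only [ht, Fin.val_mk] at h
      rw [h, ha, hz, ring_inverse_Smap lam G hlam n]
    have hopt : ⟪what t, xobs t⟫ ≤ ⟪what t, xhat t⟫ := hxhat_opt t (xobs t) (hxobs_mem t)
    have hvg : ⟪what t, g t⟫ = ⟪what t, xhat t⟫ - ⟪what t, xobs t⟫ := by
      rw [hg t, inner_sub_right]
    have hFw : Finv lam G n (zeta G n) = -(what t) := by rw [hwt, neg_neg]
    have h2 : ⟪G n, Finv lam G n (zeta G n)⟫ = -⟪what t, g t⟫ := by
      rw [hFw, inner_neg_right, hGt t, real_inner_comm]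
    rw [h2]
    linarith
  have hterm : ∀ t : Fin T, ⟪u, xobs t - xhat t⟫ = -⟪u, g t⟫ := by
    intro t
    rw [hg t, inner_sub_right, inner_sub_right]
    ring
  have hzeta : ζ T = ∑ t : Fin T, g t := by
    rw [hzT, zeta, ← Fin.sum_univ_eq_sum_range (fun i => G i) T]
    exact Finset.sum_congr rfl fun t _ => hGt t
  have hsum : (∑ t, ⟪u, xobs t - xhat t⟫) = -⟪u, ζ T⟫ := by
    rw [Finset.sum_congr rfl fun t _ => hterm t, hzeta, inner_sum]
    rw [← Finset.sum_neg_distrib]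
  have hKM : (1 + lam⁻¹ • K) = Mmat lam G T := by
    ext i j
    simp only [Matrix.add_apply, Matrix.smul_apply, Mmat, Gram, Matrix.of_apply, smul_eq_mul,
      hK i j]
    rw [hGt i, hGt j]
  refine ⟨hsum, ?_⟩
  rw [hsum, hKM, hAT, hzT]
  exact main_bound lam G hlam T halpha u
end

section
/- Let V be a real Hilbert space, λ > 0, B > 0, and consider T rounds of the CoRectron algorithm: A_0 = λI, ζ_0 = 0, and for each t = 1,…,T, ŵ_t = -A_{t-1}^{-1}ζ_{t-1}; the learner is given a nonempty set X_t ⊆ V, picks x̂_t ∈ X_t satisfying ⟨ŵ_t, x̂_t⟩ ≥ ⟨ŵ_t, x⟩ for all x ∈ X_t, observes x_t ∈ X_t, sets g_t = x̂_t - x_t, and updates A_t = A_{t-1} + g_t ⊗ g_t, ζ_t = ζ_{t-1} + g_t. Let u ∈ V. Assume optimal-action feedback, i.e., ⟨u, x_t⟩ ≥ ⟨u, x⟩ for all x ∈ X_t and every t, and the boundedness assumption ⟨u, x - x'⟩ ≤ B for all x, x' ∈ X_t and every t. Then, with H_T = log det(I_T + λ^{-1} K_T), the regret R_T(u) = Σ_{t=1}^T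 ⟨u, x_t - x̂_t⟩ satisfies R_T(u) ≤ B·H_T + ‖u‖·√(λ·H_T). -/
set_option maxHeartbeats 1600000

open scoped RealInnerProductSpace

lemma corectron_isUnit_of_coercive {V : Type*} [NormedAddCommGroup V] [InnerProductSpace ℝ V]
    [CompleteSpace V] (A : V →L[ℝ] V) (lam : ℝ) (hlam : 0 < lam)
    (hco : ∀ v, lam * ‖v‖ ^ 2 ≤ ⟪v, A v⟫) : IsUnit A := by
  have hcoer : IsCoercive ((innerSL ℝ).comp A) := by
    refine ⟨lam, hlam, fun v => ?_⟩
    simp only [ContinuousLinearMap.comp_apply, innerSL_apply_apply]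
    calc lam * ‖v‖ * ‖v‖ = lam * ‖v‖ ^ 2 := by ring
    _ ≤ ⟪v, A v⟫ := hco v
    _ = ⟪A v, v⟫ := real_inner_comm _ _
  set E := hcoer.continuousLinearEquivOfBilin with hE
  have hEA : (E : V →L[ℝ] V) = A := by
    ext v
    refine ext_inner_right ℝ fun w => ?_
    rw [ContinuousLinearEquiv.coe_coe, hcoer.continuousLinearEquivOfBilin_apply]
    simp
  exact hEA ▸ E.toUnit.isUnit

/-- Regret bound for CoRectron under optimal-action feedback and boundedness:
`R_T(u) ≤ B·H_T + ‖u‖·√(λ·H_T)` where `H_T = log det (I_T + λ⁻¹ K_T)`. -/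
theorem corectron_regret_bound_optimal_feedback
    {V : Type*} [NormedAddCommGroup V] [InnerProductSpace ℝ V] [CompleteSpace V]
    (T : ℕ) (lam B : ℝ) (hlam : 0 < lam) (hB : 0 < B)
    (X : Fin T → Set V) (hXne : ∀ t, (X t).Nonempty)
    (xhat xobs g : Fin T → V)
    (A : ℕ → (V →L[ℝ] V)) (ζ : ℕ → V) (what : Fin T → V)
    (hA0 : A 0 = lam • (1 : V →L[ℝ] V)) (hζ0 : ζ 0 = 0)
    (hwhat : ∀ t : Fin T, what t = -(Ring.inverse (A t)) (ζ t))
    (hxhat_mem : ∀ t, xhat t ∈ X t)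
    (hxhat_opt : ∀ t : Fin T, ∀ y ∈ X t, ⟪what t, y⟫ ≤ ⟪what t, xhat t⟫)
    (hxobs_mem : ∀ t, xobs t ∈ X t)
    (hg : ∀ t, g t = xhat t - xobs t)
    (hA : ∀ t : Fin T, A ((t : ℕ) + 1) = A t + rankOne (g t))
    (hζ : ∀ t : Fin T, ζ ((t : ℕ) + 1) = ζ t + g t)
    (u : V)
    (hopt : ∀ t : Fin T, ∀ y ∈ X t, ⟪u, y⟫ ≤ ⟪u, xobs t⟫)
    (hbound : ∀ t : Fin T, ∀ x ∈ X t, ∀ x' ∈ X t, ⟪u, x - x'⟫ ≤ B)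
    (K : Matrix (Fin T) (Fin T) ℝ)
    (hK : ∀ i j, K i j = ⟪g i, g j⟫) :
    (∑ t, ⟪u, xobs t - xhat t⟫) ≤
      B * Real.log (1 + lam⁻¹ • K).det +
        ‖u‖ * Real.sqrt (lam * Real.log (1 + lam⁻¹ • K).det) := by
  -- operator formula
  have hAform : ∀ n (hn : n ≤ T),
      A n = lam • (1 : V →L[ℝ] V) + ∑ j : Fin n, rankOne (g (Fin.castLE hn j)) := by
    intro n
    induction n with
    | zero => intro hn; simpa using hA0
    | succ n ih =>
      intro hn
      have hn' : n ≤ T := Nat.le_of_succ_le hn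
      have hnT : n < T := hn
      have h1 : A (n + 1) = A n + rankOne (g ⟨n, hnT⟩) := hA ⟨n, hnT⟩
      rw [h1, ih hn', Fin.sum_univ_castSucc, add_assoc]
      rfl
  have hApply : ∀ n (hn : n ≤ T) (v : V),
      A n v = lam • v + ∑ j : Fin n, ⟪g (Fin.castLE hn j), v⟫ • g (Fin.castLE hn j) := by
    intro n hn v
    rw [hAform n hn]
    simp [rankOne, ContinuousLinearMap.sum_apply]
  have hinner : ∀ n (hn : n ≤ T) (v : V),
      ⟪v, A n v⟫ = lam * ‖v‖ ^ 2 + ∑ j : Fin n, ⟪g (Fin.castLE hn j), v⟫ ^ 2 := by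
    intro n hn v
    rw [hApply n hn, inner_add_right, inner_sum, real_inner_smul_right,
      real_inner_self_eq_norm_sq]
    congr 1
    refine Finset.sum_congr rfl fun j _ => ?_
    rw [real_inner_smul_right, real_inner_comm]
    ring
  have hco : ∀ n (hn : n ≤ T) (v : V), lam * ‖v‖ ^ 2 ≤ ⟪v, A n v⟫ := by
    intro n hn v
    rw [hinner n hn v]
    have : (0:ℝ) ≤ ∑ j : Fin n, ⟪g (Fin.castLE hn j), v⟫ ^ 2 :=
      Finset.sum_nonneg fun j _ => sq_nonneg _
    linarith
  have hsym : ∀ n (hn : n ≤ T) (v w : V), ⟪A n v, w⟫ = ⟪v, A n w⟫ := by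
    intro n hn v w
    rw [hApply n hn v, hApply n hn w]
    simp only [inner_add_left, inner_add_right, real_inner_smul_left, real_inner_smul_right,
      sum_inner, inner_sum]
    congr 1
    refine Finset.sum_congr rfl fun j _ => ?_
    rw [real_inner_comm (g (Fin.castLE hn j)) v]
    ring
  have hUnit : ∀ n (hn : n ≤ T), IsUnit (A n) := fun n hn =>
    corectron_isUnit_of_coercive (A n) lam hlam (hco n hn)
  have hAinv : ∀ n (hn : n ≤ T) (v : V), A n (Ring.inverse (A n) v) = v := by
    intro n hn v
    have h := Ring.mul_inverse_cancel (A n) (hUnit n hn)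
    calc A n (Ring.inverse (A n) v) = ((A n) * Ring.inverse (A n)) v := rfl
    _ = v := by rw [h]; rfl
  have hinjA : ∀ n (hn : n ≤ T) (x y : V), A n x = A n y → x = y := by
    intro n hn x y hxy
    have h := Ring.inverse_mul_cancel (A n) (hUnit n hn)
    have : ∀ z : V, Ring.inverse (A n) (A n z) = z := by
      intro z
      calc Ring.inverse (A n) (A n z) = (Ring.inverse (A n) * A n) z := rfl
      _ = z := by rw [h]; rfl
    rw [← this x, hxy, this y]
  -- the iterate
  obtain ⟨w', hw'⟩ : ∃ w' : ℕ → V, ∀ n, w' n = -(Ring.inverse (A n)) (ζ n) :=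
    ⟨_, fun n => rfl⟩
  have hw'eq : ∀ n (hn : n ≤ T), A n (w' n) = -(ζ n) := by
    intro n hn
    rw [hw' n, map_neg, hAinv n hn]
  have hwhat' : ∀ t : Fin T, what t = w' t := fun t => by rw [hw']; exact hwhat t
  have hw'0 : w' 0 = 0 := by simp [hw', hζ0]
  -- potential function
  obtain ⟨F, hF⟩ : ∃ F : ℕ → V → ℝ, ∀ n w, F n w = ⟪w, A n w⟫ / 2 + ⟪ζ n, w⟫ :=
    ⟨_, fun n w => rfl⟩
  have hF0 : ∀ w, F 0 w = lam * ‖w‖ ^ 2 / 2 := by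
    intro w
    rw [hF]
    simp only [hζ0, hA0, inner_zero_left, add_zero, ContinuousLinearMap.smul_apply,
      ContinuousLinearMap.one_apply, real_inner_smul_right, real_inner_self_eq_norm_sq]
  have hFdiff : ∀ n (hn : n ≤ T) (w y : V), A n y = -(ζ n) →
      F n w - F n y = ⟪w - y, A n (w - y)⟫ / 2 := by
    intro n hn w y hy
    have h1 : ⟪w - y, A n (w - y)⟫
        = ⟪w, A n w⟫ - ⟪w, A n y⟫ - ⟪y, A n w⟫ + ⟪y, A n y⟫ := by
      rw [map_sub, inner_sub_left, inner_sub_right, inner_sub_right]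
      ring
    have h2 : ⟪y, A n w⟫ = ⟪w, A n y⟫ := by
      rw [← hsym n hn y w, real_inner_comm]
    have h3 : ⟪w, A n y⟫ = -⟪ζ n, w⟫ := by
      rw [hy, inner_neg_right, real_inner_comm]
    have h4 : ⟪y, A n y⟫ = -⟪ζ n, y⟫ := by
      rw [hy, inner_neg_right, real_inner_comm]
    rw [hF, hF, h1, h2, h3, h4]
    ring
  have hFmin : ∀ n (hn : n ≤ T) (w : V), F n (w' n) ≤ F n w := by
    intro n hn w
    have h := hFdiff n hn w (w' n) (hw'eq n hn)
    have h2 := hco n hn (w - w' n)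
    have h3 : (0:ℝ) ≤ lam * ‖w - w' n‖ ^ 2 := mul_nonneg hlam.le (sq_nonneg _)
    have h4 : (0:ℝ) ≤ ⟪w - w' n, A n (w - w' n)⟫ := le_trans h3 h2
    calc F n (w' n) = F n w - (F n w - F n (w' n)) := by ring
    _ ≤ F n w := by rw [h]; linarith
  -- step identity for F
  have hFstep : ∀ (t : Fin T) (w : V),
      F ((t : ℕ) + 1) w - F t w = ⟪g t, w⟫ + ⟪g t, w⟫ ^ 2 / 2 := by
    intro t w
    rw [hF, hF]
    simp only [hA t, hζ t, ContinuousLinearMap.add_apply, inner_add_right, inner_add_left]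
    have : ⟪w, rankOne (g t) w⟫ = ⟪g t, w⟫ ^ 2 := by
      simp [rankOne, real_inner_smul_right, real_inner_comm]
      ring
    rw [this]
    ring
  -- per-round quantities
  obtain ⟨r, hr⟩ : ∃ r : Fin T → ℝ, ∀ t, r t = ⟪u, xobs t - xhat t⟫ := ⟨_, fun t => rfl⟩
  obtain ⟨q, hq⟩ : ∃ q : Fin T → ℝ, ∀ t, q t = ⟪g t, Ring.inverse (A t) (g t)⟫ :=
    ⟨_, fun t => rfl⟩
  obtain ⟨s, hs⟩ : ∃ s' : Fin T → ℝ, ∀ t, s' t = ⟪g t, Ring.inverse (A ((t : ℕ) + 1)) (g t)⟫ :=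
    ⟨_, fun t => rfl⟩
  have htle : ∀ t : Fin T, (t : ℕ) ≤ T := fun t => t.2.le
  have ht1le : ∀ t : Fin T, (t : ℕ) + 1 ≤ T := fun t => t.2
  have hq0 : ∀ t, 0 ≤ q t := by
    intro t
    have h := hAinv t (htle t) (g t)
    have h2 := hco t (htle t) (Ring.inverse (A t) (g t))
    have : q t = ⟪Ring.inverse (A t) (g t), A t (Ring.inverse (A t) (g t))⟫ := by
      rw [h, hq, real_inner_comm]
    rw [this]
    nlinarith [sq_nonneg ‖Ring.inverse (A (t:ℕ)) (g t)‖]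
  have hs0 : ∀ t, 0 ≤ s t := by
    intro t
    have h := hAinv ((t : ℕ) + 1) (ht1le t) (g t)
    have h2 := hco ((t : ℕ) + 1) (ht1le t) (Ring.inverse (A ((t : ℕ) + 1)) (g t))
    have : s t = ⟪Ring.inverse (A ((t:ℕ)+1)) (g t), A ((t:ℕ)+1) (Ring.inverse (A ((t:ℕ)+1)) (g t))⟫ := by
      rw [h, hs, real_inner_comm]
    rw [this]
    nlinarith [sq_nonneg ‖Ring.inverse (A ((t:ℕ)+1)) (g t)‖]
  have hsq : ∀ t, s t * (1 + q t) = q t := by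
    intro t
    -- A (t+1) h' = g t where h' = inverse; then A t h' = (1 - s) g t, so h' = (1-s) h
    set h' := Ring.inverse (A ((t : ℕ) + 1)) (g t) with hh'
    set h := Ring.inverse (A (t : ℕ)) (g t) with hh
    have h1 : A ((t : ℕ) + 1) h' = g t := hAinv _ (ht1le t) _
    have h2 : A (t : ℕ) h' = (1 - s t) • g t := by
      have : A ((t : ℕ) + 1) h' = A (t : ℕ) h' + ⟪g t, h'⟫ • g t := by
        rw [hA t]; simp [rankOne]
      rw [h1] at this
      have hst : ⟪g t, h'⟫ = s t := by rw [hs, hh']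
      rw [hst] at this
      rw [sub_smul, one_smul]
      rw [eq_sub_iff_add_eq, ← this]
    have h3 : h' = (1 - s t) • h := by
      apply hinjA (t : ℕ) (htle t)
      rw [h2, map_smul, hAinv _ (htle t)]
    have h4 : s t = ⟪g t, h'⟫ := by rw [hs, hh']
    have h5 : q t = ⟪g t, h⟫ := by rw [hq, hh]
    have h6 : ⟪g t, h'⟫ = (1 - s t) * ⟪g t, h⟫ := by
      rw [h3, real_inner_smul_right]
    have : s t = (1 - s t) * q t := h4.trans (h6.trans (by rw [h5]))
    linarith [this]
  have hs1 : ∀ t, s t ≤ 1 := by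
    intro t
    have h1 := hsq t
    have h2 := hq0 t
    have h3 := hs0 t
    nlinarith
  have hr0 : ∀ t, 0 ≤ r t := by
    intro t
    have := hopt t (xhat t) (hxhat_mem t)
    rw [hr]
    rw [inner_sub_right]
    linarith
  have hrB : ∀ t, r t ≤ B := fun t => by
    rw [hr]; exact hbound t (xobs t) (hxobs_mem t) (xhat t) (hxhat_mem t)
  have hgu : ∀ t, ⟪g t, u⟫ = -(r t) := by
    intro t
    have e1 : ⟪xhat t, u⟫ = ⟪u, xhat t⟫ := real_inner_comm _ _
    have e2 : ⟪xobs t, u⟫ = ⟪u, xobs t⟫ := real_inner_comm _ _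
    have h1 : r t = ⟪u, xobs t⟫ - ⟪u, xhat t⟫ := by
      rw [hr]; exact inner_sub_right _ _ _
    have h2 : ⟪g t, u⟫ = ⟪xhat t, u⟫ - ⟪xobs t, u⟫ := by
      rw [hg t]; exact inner_sub_left _ _ _
    linarith
  have ha0 : ∀ t : Fin T, 0 ≤ ⟪g t, w' t⟫ := by
    intro t
    have := hxhat_opt t (xobs t) (hxobs_mem t)
    rw [hwhat' t] at this
    have e1 : ⟪xhat t, w' (t : ℕ)⟫ = ⟪w' (t : ℕ), xhat t⟫ := real_inner_comm _ _
    have e2 : ⟪xobs t, w' (t : ℕ)⟫ = ⟪w' (t : ℕ), xobs t⟫ := real_inner_comm _ _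
    have h2 : ⟪g t, w' (t : ℕ)⟫ = ⟪xhat t, w' (t : ℕ)⟫ - ⟪xobs t, w' (t : ℕ)⟫ := by
      rw [hg t]; exact inner_sub_left _ _ _
    linarith
  -- the key per-round identity
  have hkey : ∀ t : Fin T,
      F ((t : ℕ) + 1) (w' ((t : ℕ) + 1)) - F (t : ℕ) (w' (t : ℕ))
        = (⟪g t, w' t⟫ + ⟪g t, w' t⟫ ^ 2 / 2) - (1 + ⟪g t, w' t⟫) ^ 2 * s t / 2 := by
    intro t
    set a := ⟪g t, w' (t : ℕ)⟫ with hadef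
    set h' := Ring.inverse (A ((t : ℕ) + 1)) (g t) with hh'
    set d := w' (t : ℕ) - w' ((t : ℕ) + 1) with hd
    have hAd : A ((t : ℕ) + 1) d = (1 + a) • g t := by
      rw [hd, map_sub, hw'eq _ (ht1le t), hA t, ContinuousLinearMap.add_apply,
        hw'eq _ (htle t), hζ t]
      simp [rankOne, hadef]
      module
    have hdh : d = (1 + a) • h' := by
      apply hinjA _ (ht1le t)
      rw [hAd, map_smul, hh', hAinv _ (ht1le t)]
    have hdelta : F ((t : ℕ) + 1) (w' (t : ℕ)) - F ((t : ℕ) + 1) (w' ((t : ℕ) + 1))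
        = (1 + a) ^ 2 * s t / 2 := by
      rw [hFdiff ((t : ℕ) + 1) (ht1le t) _ _ (hw'eq _ (ht1le t)), ← hd, hAd, hdh,
        real_inner_smul_left, real_inner_smul_right, real_inner_comm]
      have : ⟪g t, h'⟫ = s t := by rw [hs, hh']
      rw [this]
      ring
    have hstep := hFstep t (w' (t : ℕ))
    rw [← hadef] at hstep
    linarith
  -- master inequality
  have master : ∀ c : ℝ,
      c * (∑ t, r t) - c ^ 2 * B * (∑ t, r t) / 2 ≤ lam * c ^ 2 * ‖u‖ ^ 2 / 2 + (∑ t, s t) / 2 := by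
    intro c
    have hper : ∀ t : Fin T,
        c * r t - c ^ 2 * B * r t / 2 - s t / 2 ≤
          (F ((t : ℕ) + 1) (w' ((t : ℕ) + 1)) - F (t : ℕ) (w' (t : ℕ)))
            - (F ((t : ℕ) + 1) (c • u) - F (t : ℕ) (c • u)) := by
      intro t
      rw [hkey t, hFstep t (c • u)]
      have hgcu : ⟪g t, c • u⟫ = -(c * r t) := by
        rw [real_inner_smul_right, hgu t]; ring
      rw [hgcu]
      have h1 := ha0 t
      have h2 := hs0 t
      have h3 := hs1 t
      have h4 := hr0 t
      have h5 := hrB t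
      nlinarith [sq_nonneg c, mul_nonneg (sq_nonneg c) (mul_nonneg h4 (sub_nonneg.2 h5)),
        mul_nonneg (mul_nonneg h1 (sub_nonneg.2 h3)) h1,
        mul_nonneg h1 (sub_nonneg.2 h3), sq_nonneg (c * r t)]
    have hsum : ∑ t : Fin T, (c * r t - c ^ 2 * B * r t / 2 - s t / 2)
        ≤ ∑ t : Fin T, ((F ((t : ℕ) + 1) (w' ((t : ℕ) + 1)) - F (t : ℕ) (w' (t : ℕ)))
            - (F ((t : ℕ) + 1) (c • u) - F (t : ℕ) (c • u))) :=
      Finset.sum_le_sum (fun t _ => hper t)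
    have htel1 : ∑ t : Fin T, (F ((t : ℕ) + 1) (w' ((t : ℕ) + 1)) - F (t : ℕ) (w' (t : ℕ)))
        = F T (w' T) - F 0 (w' 0) := by
      rw [Fin.sum_univ_eq_sum_range (fun n => F (n + 1) (w' (n + 1)) - F n (w' n)) T]
      exact Finset.sum_range_sub (fun n => F n (w' n)) T
    have htel2 : ∑ t : Fin T, (F ((t : ℕ) + 1) (c • u) - F (t : ℕ) (c • u))
        = F T (c • u) - F 0 (c • u) := by
      rw [Fin.sum_univ_eq_sum_range (fun n => F (n + 1) (c • u) - F n (c • u)) T]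
      exact Finset.sum_range_sub (fun n => F n (c • u)) T
    have htel3 : ∑ t : Fin T, ((F ((t : ℕ) + 1) (w' ((t : ℕ) + 1)) - F (t : ℕ) (w' (t : ℕ)))
            - (F ((t : ℕ) + 1) (c • u) - F (t : ℕ) (c • u)))
        = (F T (w' T) - F 0 (w' 0)) - (F T (c • u) - F 0 (c • u)) := by
      rw [Finset.sum_sub_distrib]
      rw [htel1, htel2]
    have hsum2 : ∑ t : Fin T, (c * r t - c ^ 2 * B * r t / 2 - s t / 2)
        ≤ (F T (w' T) - F 0 (w' 0)) - (F T (c • u) - F 0 (c • u)) :=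
      le_trans hsum (le_of_eq htel3)
    have hmin := hFmin T le_rfl (c • u)
    have hF0w : F 0 (w' 0) = 0 := by rw [hw'0, hF0]; simp
    have hF0c : F 0 (c • u) = lam * c ^ 2 * ‖u‖ ^ 2 / 2 := by
      rw [hF0, norm_smul]
      simp [Real.norm_eq_abs, mul_pow, sq_abs]
      ring
    have hlhs : ∑ t : Fin T, (c * r t - c ^ 2 * B * r t / 2 - s t / 2)
        = c * (∑ t, r t) - c ^ 2 * B * (∑ t, r t) / 2 - (∑ t, s t) / 2 := by
      rw [Finset.sum_sub_distrib, Finset.sum_sub_distrib, ← Finset.mul_sum,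
        Finset.sum_div, ← Finset.sum_div, ← Finset.mul_sum]
    rw [hlhs, hF0w, hF0c] at hsum2
    linarith [hsum2, hmin]
  -- determinant identity
  have hqpos : ∀ t : Fin T, (0:ℝ) < 1 + q t := fun t => by linarith [hq0 t]
  have hdetind : ∀ n (hn : n ≤ T),
      (Matrix.of fun i j : Fin n =>
        lam * (if i = j then (1:ℝ) else 0) + ⟪g (Fin.castLE hn i), g (Fin.castLE hn j)⟫).det
      = lam ^ n * ∏ j : Fin n, (1 + q (Fin.castLE hn j)) := by
    intro n
    induction n with
    | zero => intro hn; simp [Matrix.det_fin_zero]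
    | succ n ih =>
      intro hn
      have hn' : n ≤ T := Nat.le_of_succ_le hn
      have hnT : n < T := hn
      have hNn : ((⟨n, hnT⟩ : Fin T) : ℕ) = n := rfl
      obtain ⟨M, hM⟩ : ∃ M : Matrix (Fin n) (Fin n) ℝ, ∀ i j, M i j =
          lam * (if i = j then (1:ℝ) else 0) + ⟪g (Fin.castLE hn' i), g (Fin.castLE hn' j)⟫ :=
        ⟨_, fun i j => rfl⟩
      have hMof : M = Matrix.of fun i j : Fin n =>
          lam * (if i = j then (1:ℝ) else 0) + ⟪g (Fin.castLE hn' i), g (Fin.castLE hn' j)⟫ := by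
        ext i j; exact hM i j
      have hdetM : M.det = lam ^ n * ∏ j : Fin n, (1 + q (Fin.castLE hn' j)) := by
        rw [hMof]; exact ih hn'
      have hdetMpos : 0 < M.det := by
        rw [hdetM]
        exact mul_pos (pow_pos hlam n) (Finset.prod_pos fun j _ => hqpos _)
      haveI hMinv : Invertible M := M.invertibleOfIsUnitDet (isUnit_iff_ne_zero.2 hdetMpos.ne')
      obtain ⟨v, hv⟩ : ∃ v : Fin n → ℝ, ∀ j, v j = ⟪g (Fin.castLE hn' j), g ⟨n, hnT⟩⟫ :=
        ⟨_, fun j => rfl⟩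
      obtain ⟨α, hα⟩ : ∃ α : Fin n → ℝ, α = Matrix.mulVec (⅟ M) v := ⟨_, rfl⟩
      have hMα : Matrix.mulVec M α = v := by
        rw [hα, Matrix.mulVec_mulVec, mul_invOf_self, Matrix.one_mulVec]
      have hMαj : ∀ j, lam * α j
          + ∑ k, ⟪g (Fin.castLE hn' j), g (Fin.castLE hn' k)⟫ * α k = v j := by
        intro j
        have h1 := congrFun hMα j
        rw [Matrix.mulVec, dotProduct] at h1
        rw [← h1]
        rw [Finset.sum_congr rfl fun k _ => congrArg (· * α k) (hM j k)]
        simp only [add_mul, Finset.sum_add_distrib, ite_mul, mul_ite, mul_zero, zero_mul,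
          one_mul, mul_one, Finset.sum_ite_eq, Finset.mem_univ, if_true]
      -- the representer vector
      obtain ⟨x, hx⟩ : ∃ x : V,
          x = lam⁻¹ • (g ⟨n, hnT⟩ - ∑ j : Fin n, α j • g (Fin.castLE hn' j)) := ⟨_, rfl⟩
      have hgx : ∀ j : Fin n, ⟪g (Fin.castLE hn' j), x⟫ = α j := by
        intro j
        rw [hx, real_inner_smul_right, inner_sub_right, inner_sum]
        rw [Finset.sum_congr rfl fun k _ => real_inner_smul_right _ _ (α k)]
        have h2 := hMαj j
        have h3 : ⟪g (Fin.castLE hn' j), g ⟨n, hnT⟩⟫ = v j := (hv j).symm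
        rw [h3]
        rw [Finset.sum_congr rfl fun k _ =>
          (mul_comm (α k) ⟪g (Fin.castLE hn' j), g (Fin.castLE hn' k)⟫)]
        field_simp
        linarith [h2]
      have hAx : A n x = g ⟨n, hnT⟩ := by
        rw [hApply n hn' x]
        rw [Finset.sum_congr rfl fun j _ => congrArg (· • g (Fin.castLE hn' j)) (hgx j)]
        rw [hx, smul_smul, mul_inv_cancel₀ hlam.ne', one_smul, sub_add_cancel]
      have hxinv : Ring.inverse (A n) (g ⟨n, hnT⟩) = x :=
        hinjA n hn' _ _ (by rw [hAinv n hn' (g ⟨n, hnT⟩), hAx])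
      have hqN : q ⟨n, hnT⟩ = ⟪g ⟨n, hnT⟩, x⟫ := by
        rw [hq ⟨n, hnT⟩]
        rw [show A ((⟨n, hnT⟩ : Fin T) : ℕ) = A n from rfl, hxinv]
      have hkeyq : lam * (1 + q ⟨n, hnT⟩)
          = lam + ⟪g ⟨n, hnT⟩, g ⟨n, hnT⟩⟫ - ∑ j, α j * v j := by
        rw [hqN, hx, real_inner_smul_right, inner_sub_right, inner_sum]
        rw [Finset.sum_congr rfl fun k _ => real_inner_smul_right _ _ (α k)]
        rw [Finset.sum_congr rfl fun k _ => congrArg (α k * ·)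
          (real_inner_comm (g (Fin.castLE hn' k)) (g ⟨n, hnT⟩))]
        rw [Finset.sum_congr rfl fun k _ => congrArg (α k * ·) (hv k).symm]
        field_simp
        ring
      -- symmetry of M and of its inverse
      have hMT : M.transpose = M := by
        ext i j
        rw [Matrix.transpose_apply, hM j i, hM i j,
          real_inner_comm (g (Fin.castLE hn' i)) (g (Fin.castLE hn' j))]
        by_cases hij : i = j
        · subst hij; rfl
        · rw [if_neg hij, if_neg (Ne.symm hij)]
      have hinvsym : ∀ k j, M⁻¹ k j = M⁻¹ j k := by
        intro k j
        have h1 : (M⁻¹).transpose = M⁻¹ := by rw [Matrix.transpose_nonsing_inv, hMT]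
        conv_lhs => rw [← h1]
        rw [Matrix.transpose_apply]
      have hinvOf : ⅟ M = M⁻¹ := Matrix.invOf_eq_nonsing_inv M
      -- block decomposition
      obtain ⟨M', hM'⟩ : ∃ M' : Matrix (Fin (n+1)) (Fin (n+1)) ℝ, M' =
          Matrix.of (fun i j : Fin (n+1) =>
            lam * (if i = j then (1:ℝ) else 0) + ⟪g (Fin.castLE hn i), g (Fin.castLE hn j)⟫) :=
        ⟨_, rfl⟩
      have hblock : M'.submatrix finSumFinEquiv finSumFinEquiv
          = Matrix.fromBlocks M (Matrix.of fun j (_ : Fin 1) => v j)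
              (Matrix.of fun (_ : Fin 1) j => v j)
              (Matrix.of fun _ _ => lam + ⟪g ⟨n, hnT⟩, g ⟨n, hnT⟩⟫) := by
        ext i j
        have hNidx : Fin.castLE hn (finSumFinEquiv (Sum.inr (0 : Fin 1))) = ⟨n, hnT⟩ := by
          apply Fin.ext
          simp [finSumFinEquiv_apply_right]
        cases i with
        | inl i =>
          have hi : Fin.castLE hn (finSumFinEquiv (Sum.inl i)) = Fin.castLE hn' i := by
            apply Fin.ext
            simp [finSumFinEquiv_apply_left]
          cases j with
          | inl j =>
            have hj : Fin.castLE hn (finSumFinEquiv (Sum.inl j)) = Fin.castLE hn' j := by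
              apply Fin.ext
              simp [finSumFinEquiv_apply_left]
            simp only [Matrix.submatrix_apply, hM', Matrix.of_apply, Matrix.fromBlocks_apply₁₁,
              hM i j, hi, hj]
            congr 1
            by_cases hij : i = j
            · subst hij; rw [if_pos rfl, if_pos rfl]
            · rw [if_neg (fun hcon => hij (Sum.inl_injective (Equiv.injective _ hcon))),
                if_neg hij]
          | inr j =>
            have hj0 : j = 0 := Subsingleton.elim _ _
            subst hj0
            have hne : finSumFinEquiv (Sum.inl i) ≠ finSumFinEquiv (Sum.inr (0 : Fin 1)) := by
              intro hcon
              exact absurd (Equiv.injective _ hcon) (by simp)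
            simp only [Matrix.submatrix_apply, hM', Matrix.of_apply, Matrix.fromBlocks_apply₁₂,
              hi, hNidx, if_neg hne, hv i]
            ring
        | inr i =>
          have hi0 : i = 0 := Subsingleton.elim _ _
          subst hi0
          cases j with
          | inl j =>
            have hj : Fin.castLE hn (finSumFinEquiv (Sum.inl j)) = Fin.castLE hn' j := by
              apply Fin.ext
              simp [finSumFinEquiv_apply_left]
            have hne : finSumFinEquiv (Sum.inr (0 : Fin 1)) ≠ finSumFinEquiv (Sum.inl j) := by
              intro hcon
              exact absurd (Equiv.injective _ hcon) (by simp)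
            simp only [Matrix.submatrix_apply, hM', Matrix.of_apply, Matrix.fromBlocks_apply₂₁,
              hj, hNidx, if_neg hne, hv j]
            rw [real_inner_comm]
            ring
          | inr j =>
            have hj0 : j = 0 := Subsingleton.elim _ _
            subst hj0
            simp only [Matrix.submatrix_apply, hM', Matrix.of_apply, Matrix.fromBlocks_apply₂₂,
              hNidx]
            norm_num
      have hdetM' : M'.det = M.det * (lam * (1 + q ⟨n, hnT⟩)) := by
        rw [← Matrix.det_submatrix_equiv_self finSumFinEquiv M', hblock,
          Matrix.det_fromBlocks₁₁]
        congr 1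
        rw [Matrix.det_fin_one]
        simp only [Matrix.sub_apply, Matrix.of_apply, Matrix.mul_apply]
        rw [hkeyq]
        have hsum : ∑ j : Fin n, (∑ k : Fin n, v k * (⅟ M) k j) * v j
            = ∑ j : Fin n, α j * v j := by
          refine Finset.sum_congr rfl fun j _ => ?_
          congr 1
          rw [hα]
          rw [Matrix.mulVec, dotProduct]
          refine Finset.sum_congr rfl fun k _ => ?_
          rw [hinvOf, hinvsym k j]
          ring
        rw [hsum]
      -- conclude the induction step
      have hM'det : (Matrix.of fun i j : Fin (n+1) =>
          lam * (if i = j then (1:ℝ) else 0) + ⟪g (Fin.castLE hn i), g (Fin.castLE hn j)⟫).det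
          = M'.det := by rw [hM']
      rw [hM'det, hdetM', hdetM, Fin.prod_univ_castSucc]
      have h1 : ∀ j : Fin n, q (Fin.castLE hn j.castSucc) = q (Fin.castLE hn' j) := fun j => rfl
      have h2 : q (Fin.castLE hn (Fin.last n)) = q ⟨n, hnT⟩ := rfl
      rw [Finset.prod_congr rfl fun j _ => congrArg (1 + ·) (h1 j), h2]
      ring
  -- from the induction to the Gram determinant
  have hdetK : (1 + lam⁻¹ • K).det = ∏ t : Fin T, (1 + q t) := by
    have h1 : (Matrix.of fun i j : Fin T =>
        lam * (if i = j then (1:ℝ) else 0) + ⟪g (Fin.castLE le_rfl i), g (Fin.castLE le_rfl j)⟫)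
        = lam • (1 + lam⁻¹ • K) := by
      ext i j
      simp only [Matrix.of_apply, Matrix.smul_apply, Matrix.add_apply, Matrix.one_apply,
        Fin.castLE_rfl, id_eq, smul_eq_mul, hK i j]
      field_simp [hlam.ne']
    have h2 := hdetind T le_rfl
    rw [h1, Matrix.det_smul] at h2
    have h3 : ∀ t : Fin T, q (Fin.castLE le_rfl t) = q t := fun t => rfl
    rw [Finset.prod_congr rfl fun t _ => congrArg (1 + ·) (h3 t)] at h2
    have hcard : Fintype.card (Fin T) = T := Fintype.card_fin T
    rw [hcard] at h2
    have hpow : (0:ℝ) < lam ^ T := pow_pos hlam T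
    exact mul_left_cancel₀ hpow.ne' h2
  -- entropy bound
  have hH : Real.log (1 + lam⁻¹ • K).det = ∑ t : Fin T, Real.log (1 + q t) := by
    rw [hdetK, Real.log_prod]
    exact fun t _ => (hqpos t).ne'
  have hH0 : 0 ≤ Real.log (1 + lam⁻¹ • K).det := by
    rw [hH]
    exact Finset.sum_nonneg fun t _ => Real.log_nonneg (by linarith [hq0 t])
  have hslog : ∀ t, s t ≤ Real.log (1 + q t) := by
    intro t
    have h1 := hsq t
    have h2 := hq0 t
    have h3 := hqpos t
    have h4 := Real.log_le_sub_one_of_pos (x := (1 + q t)⁻¹) (by positivity)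
    rw [Real.log_inv] at h4
    have h5 : s t = 1 - (1 + q t)⁻¹ := by
      have h6 : s t * (1 + q t) = (1 - (1 + q t)⁻¹) * (1 + q t) := by
        rw [h1, sub_mul, inv_mul_cancel₀ h3.ne', one_mul]
        ring
      exact mul_right_cancel₀ h3.ne' h6
    linarith
  have hSH : ∑ t, s t ≤ Real.log (1 + lam⁻¹ • K).det := by
    rw [hH]
    exact Finset.sum_le_sum fun t _ => hslog t
  -- endgame
  have hgoalR : (∑ t, ⟪u, xobs t - xhat t⟫) = ∑ t, r t :=
    Finset.sum_congr rfl fun t _ => (hr t).symm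
  rw [hgoalR]
  have hRsum0 : 0 ≤ ∑ t, r t := Finset.sum_nonneg fun t _ => hr0 t
  have master' : ∀ c : ℝ, c * (∑ t, r t) - c ^ 2 * B * (∑ t, r t) / 2
      ≤ lam * c ^ 2 * ‖u‖ ^ 2 / 2 + Real.log (1 + lam⁻¹ • K).det / 2 := by
    intro c
    have := master c
    have hSH' := hSH
    linarith
  clear master hSH hH hdetK hdetind
  generalize hHdef : Real.log (1 + lam⁻¹ • K).det = H at master' hH0 ⊢
  generalize hRdef : (∑ t, r t) = R at master' hRsum0 ⊢
  have hU0 : (0:ℝ) ≤ ‖u‖ := norm_nonneg u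
  rcases eq_or_lt_of_le hH0 with h0 | hpos
  · -- H = 0
    have hsqrt0 : Real.sqrt (lam * H) = 0 := by rw [← h0, mul_zero, Real.sqrt_zero]
    rw [hsqrt0, ← h0]
    by_contra hcon
    push_neg at hcon
    have hRpos : 0 < R := by
      have : B * (0:ℝ) + ‖u‖ * 0 = 0 := by ring
      linarith
    obtain ⟨P, hP⟩ : ∃ P : ℝ, P = lam * ‖u‖ ^ 2 + B * R + 1 := ⟨_, rfl⟩
    have hPpos : 0 < P := by
      rw [hP]
      nlinarith [mul_nonneg hlam.le (sq_nonneg ‖u‖), mul_pos hB hRpos]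
    have m := master' (R / P)
    rw [← h0] at m
    have e1 : (R / P * R - (R / P) ^ 2 * B * R / 2) * (2 * P ^ 2)
        = 2 * R ^ 2 * P - R ^ 2 * B * R := by
      field_simp
    have e2 : (lam * (R / P) ^ 2 * ‖u‖ ^ 2 / 2 + 0 / 2) * (2 * P ^ 2)
        = lam * R ^ 2 * ‖u‖ ^ 2 := by
      field_simp
      ring
    have m2 : 2 * R ^ 2 * P - R ^ 2 * B * R ≤ lam * R ^ 2 * ‖u‖ ^ 2 := by
      rw [← e1, ← e2]
      exact mul_le_mul_of_nonneg_right m (by positivity)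
    rw [hP] at m2
    nlinarith [mul_pos hRpos hRpos, mul_pos (mul_pos hRpos hRpos) hRpos,
      mul_nonneg (mul_nonneg hlam.le (sq_nonneg ‖u‖)) (mul_pos hRpos hRpos).le,
      mul_pos hB (mul_pos hRpos hRpos)]
  · -- H > 0
    obtain ⟨σ, hσdef⟩ : ∃ σ : ℝ, σ = Real.sqrt lam := ⟨_, rfl⟩
    obtain ⟨τ, hτdef⟩ : ∃ τ : ℝ, τ = Real.sqrt H := ⟨_, rfl⟩
    have hσpos : 0 < σ := by rw [hσdef]; exact Real.sqrt_pos.2 hlam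
    have hτpos : 0 < τ := by rw [hτdef]; exact Real.sqrt_pos.2 hpos
    have hσ2 : σ ^ 2 = lam := by rw [hσdef, Real.sq_sqrt hlam.le]
    have hτ2 : τ ^ 2 = H := by rw [hτdef, Real.sq_sqrt hpos.le]
    have hsqrtlamH : Real.sqrt (lam * H) = σ * τ := by
      rw [hσdef, hτdef, Real.sqrt_mul hlam.le]
    rw [hsqrtlamH, ← hτ2]
    obtain ⟨D, hD⟩ : ∃ D : ℝ, D = B * τ + ‖u‖ * σ := ⟨_, rfl⟩
    have hDpos : 0 < D := by
      rw [hD]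
      nlinarith [mul_pos hB hτpos, mul_nonneg hU0 hσpos.le]
    have m := master' (τ / D)
    rw [← hτ2, ← hσ2] at m
    have e1 : (τ / D * R - (τ / D) ^ 2 * B * R / 2) * (2 * D ^ 2)
        = 2 * τ * D * R - τ ^ 2 * B * R := by
      field_simp
    have e2 : (σ ^ 2 * (τ / D) ^ 2 * ‖u‖ ^ 2 / 2 + τ ^ 2 / 2) * (2 * D ^ 2)
        = σ ^ 2 * τ ^ 2 * ‖u‖ ^ 2 + τ ^ 2 * D ^ 2 := by
      field_simp
    have m2 : 2 * τ * D * R - τ ^ 2 * B * R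
        ≤ σ ^ 2 * τ ^ 2 * ‖u‖ ^ 2 + τ ^ 2 * D ^ 2 := by
      rw [← e1, ← e2]
      exact mul_le_mul_of_nonneg_right m (by positivity)
    rw [hD] at m2
    have hpos2 : 0 < B * τ ^ 2 + 2 * (‖u‖ * σ * τ) := by
      nlinarith [mul_pos hB (mul_pos hτpos hτpos),
        mul_nonneg (mul_nonneg hU0 hσpos.le) hτpos.le]
    have hBU3 : (0:ℝ) ≤ B * ‖u‖ * σ * τ ^ 3 := by positivity
    nlinarith [m2, hpos2, hBU3]
end

section
/- (Log-determinant vs. effective dimension) Let K ∈ ℝ^{T×T} be a positive semidefinite symmetric matrix and λ > 0. Define the effective dimension d_eff(λ) = tr(K(K + λ·I_T)^{-1}) and let ‖K‖_op denote the operator norm (largest eigenvalue) of K. Then log det(I_T + λ^{-1} K) ≤ d_eff(λ) · (1 + log(1 + λ^{-1}‖K‖_op)). -/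
open scoped Matrix.Norms.L2Operator
open Matrix Finset

private lemma scalar_step (lam s M : ℝ) (hlam : 0 < lam) (hs : 0 ≤ s) (hsM : s ≤ M) :
    Real.log (1 + lam⁻¹ * s) ≤ s * (s + lam)⁻¹ * (1 + Real.log (1 + lam⁻¹ * M)) := by
  have hx : 0 ≤ lam⁻¹ * s := by positivity
  have h1x : (0:ℝ) < 1 + lam⁻¹ * s := by linarith
  set x := lam⁻¹ * s with hxdef
  set C := Real.log (1 + lam⁻¹ * M) with hC
  have h1 : Real.log (1 + x) ≤ x := by
    have := Real.log_le_sub_one_of_pos h1x; linarith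
  have h2 : Real.log (1 + x) ≤ C := by
    apply Real.log_le_log h1x
    have : lam⁻¹ * s ≤ lam⁻¹ * M := mul_le_mul_of_nonneg_left hsM (by positivity)
    linarith
  have key : (1 + x) * Real.log (1 + x) ≤ x * (1 + C) := by nlinarith
  have hsl : (0:ℝ) < s + lam := by linarith
  have hxx : s * (s + lam)⁻¹ = x * (1 + x)⁻¹ := by
    rw [hxdef]; field_simp; ring
  rw [hxx]
  have := mul_le_mul_of_nonneg_right key (le_of_lt (inv_pos.mpr h1x))
  calc Real.log (1 + x) = (1 + x) * Real.log (1 + x) * (1 + x)⁻¹ := by field_simp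
    _ ≤ x * (1 + C) * (1 + x)⁻¹ := this
    _ = x * (1 + x)⁻¹ * (1 + C) := by ring

private lemma conj_mul_conj {T : ℕ} (U A B : Matrix (Fin T) (Fin T) ℝ)
    (h : star U * U = 1) :
    (U * A * star U) * (U * B * star U) = U * (A * B) * star U := by
  have h2 : star U * (U * (B * star U)) = B * star U := by
    rw [← Matrix.mul_assoc, h, Matrix.one_mul]
  simp only [Matrix.mul_assoc, h2]

private lemma eigenvalue_le_opNorm {T : ℕ} (K : Matrix (Fin T) (Fin T) ℝ)
    (hH : K.IsHermitian) (i : Fin T) : hH.eigenvalues i ≤ ‖K‖ := by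
  have hv := hH.mulVec_eigenvectorBasis i
  have hnorm : ‖(hH.eigenvectorBasis i : EuclideanSpace ℝ (Fin T))‖ = 1 :=
    hH.eigenvectorBasis.orthonormal.1 i
  have hle := K.l2_opNorm_mulVec (hH.eigenvectorBasis i)
  erw [hv] at hle
  rw [hnorm, mul_one, _root_.map_smul, norm_smul] at hle
  simp [hnorm] at hle
  calc hH.eigenvalues i ≤ |hH.eigenvalues i| := le_abs_self _
    _ ≤ ‖K‖ := hle

/-- Log-determinant vs. effective dimension: for PSD `K` and `λ > 0`,
`log det (I + λ⁻¹ K) ≤ d_eff(λ) (1 + log(1 + λ⁻¹ ‖K‖_op))`, where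
`d_eff(λ) = tr (K (K + λI)⁻¹)` and `‖K‖_op` is the L2 operator norm of `K`. -/
theorem logdet_le_effective_dimension
    (T : ℕ) (K : Matrix (Fin T) (Fin T) ℝ) (hK : K.PosSemidef)
    (lam : ℝ) (hlam : 0 < lam) :
    Real.log (1 + lam⁻¹ • K).det ≤
      (K * (K + lam • 1)⁻¹).trace * (1 + Real.log (1 + lam⁻¹ * ‖K‖)) := by
  classical
  have hH : K.IsHermitian := hK.1
  set U : Matrix (Fin T) (Fin T) ℝ := (hH.eigenvectorUnitary : Matrix (Fin T) (Fin T) ℝ)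
    with hUdef
  have hUU : star U * U = 1 := Unitary.coe_star_mul_self hH.eigenvectorUnitary
  have hUU' : U * star U = 1 := Unitary.coe_mul_star_self hH.eigenvectorUnitary
  set μ : Fin T → ℝ := hH.eigenvalues with hμdef
  have hμ0 : ∀ i, 0 ≤ μ i := hK.eigenvalues_nonneg
  have hμB : ∀ i, μ i ≤ ‖K‖ := eigenvalue_le_opNorm K hH
  have hspec : K = U * diagonal μ * star U := by
    simpa using hH.spectral_theorem
  -- rewrite conjugations
  have hconj : ∀ A : Matrix (Fin T) (Fin T) ℝ,
      (1 : Matrix (Fin T) (Fin T) ℝ) + lam⁻¹ • (U * A * star U)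
        = U * (1 + lam⁻¹ • A) * star U := by
    intro A
    rw [Matrix.mul_add, Matrix.add_mul, Matrix.mul_one, hUU',
      Matrix.mul_smul, Matrix.smul_mul]
  -- determinant identity
  have hdetU : U.det * (star U).det = 1 := by
    rw [← Matrix.det_mul, hUU', Matrix.det_one]
  have hdiag1 : (1 : Matrix (Fin T) (Fin T) ℝ) + lam⁻¹ • diagonal μ
      = diagonal (fun i => 1 + lam⁻¹ * μ i) := by
    rw [← Matrix.diagonal_one, ← Matrix.diagonal_smul, ← Matrix.diagonal_add]
    congr 1
  have hdet : (1 + lam⁻¹ • K).det = ∏ i, (1 + lam⁻¹ * μ i) := by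
    rw [hspec, hconj, hdiag1, Matrix.det_mul, Matrix.det_mul, Matrix.det_diagonal]
    calc U.det * (∏ i, (1 + lam⁻¹ * μ i)) * (star U).det
        = (∏ i, (1 + lam⁻¹ * μ i)) * (U.det * (star U).det) := by ring
      _ = ∏ i, (1 + lam⁻¹ * μ i) := by rw [hdetU, mul_one]
  -- K + lam • 1 conjugation
  have hKl : K + lam • (1 : Matrix (Fin T) (Fin T) ℝ)
      = U * diagonal (fun i => μ i + lam) * star U := by
    have h1 : (1 : Matrix (Fin T) (Fin T) ℝ) = U * 1 * star U := by
      rw [Matrix.mul_one, hUU']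
    have h2 : diagonal (fun i => μ i + lam)
        = diagonal μ + lam • (1 : Matrix (Fin T) (Fin T) ℝ) := by
      ext i j
      by_cases h : i = j <;>
        simp [Matrix.diagonal_apply, Matrix.one_apply, h]
    rw [hspec, h2, Matrix.mul_add, Matrix.add_mul]
    congr 1
    rw [Matrix.mul_smul, Matrix.smul_mul, Matrix.mul_one, hUU']
  have hpos : ∀ i, (0:ℝ) < μ i + lam := fun i => by have := hμ0 i; linarith
  have hDinv : diagonal (fun i => μ i + lam) * diagonal (fun i => (μ i + lam)⁻¹)
      = (1 : Matrix (Fin T) (Fin T) ℝ) := by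
    rw [Matrix.diagonal_mul_diagonal,
      show (fun i => (μ i + lam) * (μ i + lam)⁻¹) = (fun _ => (1:ℝ)) from
        funext (fun i => mul_inv_cancel₀ (ne_of_gt (hpos i))), Matrix.diagonal_one]
  have hinv : (K + lam • 1)⁻¹ = U * diagonal (fun i => (μ i + lam)⁻¹) * star U := by
    apply Matrix.inv_eq_right_inv
    rw [hKl, conj_mul_conj _ _ _ hUU, hDinv, Matrix.mul_one, hUU']
  -- trace identity
  have htr : (K * (K + lam • 1)⁻¹).trace = ∑ i, μ i * (μ i + lam)⁻¹ := by
    rw [hinv]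
    nth_rewrite 1 [hspec]
    rw [conj_mul_conj _ _ _ hUU, Matrix.diagonal_mul_diagonal,
      Matrix.trace_mul_comm, ← Matrix.mul_assoc, hUU, Matrix.one_mul,
      Matrix.trace_diagonal]
  -- put together
  rw [hdet, htr]
  have hfac : ∀ i : Fin T, (0:ℝ) < 1 + lam⁻¹ * μ i := by
    intro i
    have : 0 ≤ lam⁻¹ * μ i := by have := hμ0 i; positivity
    linarith
  rw [Real.log_prod (fun i _ => ne_of_gt (hfac i)), Finset.sum_mul]
  apply Finset.sum_le_sum
  intro i _
  exact scalar_step lam (μ i) ‖K‖ hlam (hμ0 i) (hμB i)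
end

section
/- (Potential increment identity) Let V be a real Hilbert space, λ > 0, a_1,…,a_m ∈ V, and let A = λI + Σ_{i=1}^m a_i ⊗ a_i (an invertible operator on V). Let ζ, g ∈ V, and set A' = A + g ⊗ g, ζ' = ζ + g, μ = ⟨g, A^{-1} g⟩, and ν = ⟨g, A^{-1} ζ⟩. Then ⟨ζ', A'^{-1} ζ'⟩ - ⟨ζ, A^{-1} ζ⟩ = (μ + 2ν - ν²)/(1 + μ). In particular, if ν ≤ 0 then ⟨ζ', A'^{-1} ζ'⟩ - ⟨ζ, A^{-1} ζ⟩ ≤ μ/(1 + μ). -/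
open scoped RealInnerProductSpace

/-- A coercive continuous linear operator on a real Hilbert space is a unit
(invertible), by the Lax–Milgram theorem. -/
lemma isUnit_of_coercive {V : Type*} [NormedAddCommGroup V] [InnerProductSpace ℝ V]
    [CompleteSpace V] (T : V →L[ℝ] V) (lam : ℝ) (hlam : 0 < lam)
    (h : ∀ v, lam * ‖v‖ * ‖v‖ ≤ ⟪T v, v⟫) : IsUnit T := by
  have hc : IsCoercive ((innerSL ℝ).comp T) := ⟨lam, hlam, fun u => h u⟩
  have he : ∀ v, hc.continuousLinearEquivOfBilin v = T v := by
    intro v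
    refine ext_inner_right ℝ fun w => ?_
    exact hc.continuousLinearEquivOfBilin_apply v w
  refine ⟨⟨T, hc.continuousLinearEquivOfBilin.symm, ?_, ?_⟩, rfl⟩
  · ext v
    rw [ContinuousLinearMap.mul_apply, ContinuousLinearMap.one_apply, ← he]
    exact hc.continuousLinearEquivOfBilin.apply_symm_apply v
  · ext v
    rw [ContinuousLinearMap.mul_apply, ContinuousLinearMap.one_apply, ← he]
    exact hc.continuousLinearEquivOfBilin.symm_apply_apply v

/-- Potential increment identity: with `A = λI + Σ aᵢ ⊗ aᵢ`, `A' = A + g ⊗ g`,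
`ζ' = ζ + g`, `μ = ⟪g, A⁻¹ g⟫`, and `ν = ⟪g, A⁻¹ ζ⟫`, one has
`⟪ζ', A'⁻¹ ζ'⟫ - ⟪ζ, A⁻¹ ζ⟫ = (μ + 2ν - ν²)/(1 + μ)`; in particular, if `ν ≤ 0`
then the increment is at most `μ/(1 + μ)`. -/
theorem potential_increment_identity
    {V : Type*} [NormedAddCommGroup V] [InnerProductSpace ℝ V] [CompleteSpace V]
    (lam : ℝ) (hlam : 0 < lam) (m : ℕ) (a : Fin m → V)
    (A : V →L[ℝ] V) (hA : A = lam • (1 : V →L[ℝ] V) + ∑ i, rankOne (a i))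
    (ζ g : V) (μ ν : ℝ)
    (hμ : μ = ⟪g, (Ring.inverse A) g⟫) (hν : ν = ⟪g, (Ring.inverse A) ζ⟫) :
    ⟪ζ + g, (Ring.inverse (A + rankOne g)) (ζ + g)⟫ - ⟪ζ, (Ring.inverse A) ζ⟫ =
      (μ + 2 * ν - ν ^ 2) / (1 + μ) ∧
    (ν ≤ 0 →
      ⟪ζ + g, (Ring.inverse (A + rankOne g)) (ζ + g)⟫ - ⟪ζ, (Ring.inverse A) ζ⟫ ≤
        μ / (1 + μ)) := by
  -- coercivity of A
  have hApos : ∀ v, lam * ‖v‖ * ‖v‖ ≤ ⟪A v, v⟫ := by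
    intro v
    rw [hA]
    simp only [ContinuousLinearMap.add_apply, ContinuousLinearMap.smul_apply,
      ContinuousLinearMap.one_apply, ContinuousLinearMap.sum_apply, rankOne,
      ContinuousLinearMap.smulRight_apply, innerSL_apply_apply]
    rw [inner_add_left, real_inner_smul_left, sum_inner, real_inner_self_eq_norm_mul_norm]
    have : 0 ≤ ∑ i, ⟪(⟪a i, v⟫ : ℝ) • a i, v⟫ := by
      refine Finset.sum_nonneg fun i _ => ?_
      rw [real_inner_smul_left, real_inner_comm]
      exact mul_self_nonneg _
    nlinarith
  -- symmetry of A
  have hAsym : ∀ u v, ⟪A u, v⟫ = ⟪u, A v⟫ := by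
    intro u v
    rw [hA]
    simp only [ContinuousLinearMap.add_apply, ContinuousLinearMap.smul_apply,
      ContinuousLinearMap.one_apply, ContinuousLinearMap.sum_apply, rankOne,
      ContinuousLinearMap.smulRight_apply, innerSL_apply_apply]
    rw [inner_add_left, inner_add_right, real_inner_smul_left, real_inner_smul_right,
      sum_inner, inner_sum]
    congr 1
    refine Finset.sum_congr rfl fun i _ => ?_
    rw [real_inner_smul_left, real_inner_smul_right, real_inner_comm u (a i), mul_comm]
  have uA : IsUnit A := isUnit_of_coercive A lam hlam hApos
  set B := Ring.inverse A with hB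
  have hAB : A * B = 1 := Ring.mul_inverse_cancel A uA
  have hBA : B * A = 1 := Ring.inverse_mul_cancel A uA
  have hABv : ∀ x, A (B x) = x := by
    intro x
    have := congrArg (fun f : V →L[ℝ] V => f x) hAB
    simpa [ContinuousLinearMap.mul_apply] using this
  have hBAv : ∀ x, B (A x) = x := by
    intro x
    have := congrArg (fun f : V →L[ℝ] V => f x) hBA
    simpa [ContinuousLinearMap.mul_apply] using this
  -- symmetry of B
  have hBsym : ∀ u v, ⟪B u, v⟫ = ⟪u, B v⟫ := by
    intro u v
    calc ⟪B u, v⟫ = ⟪B u, A (B v)⟫ := by rw [hABv]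
    _ = ⟪A (B u), B v⟫ := (hAsym _ _).symm
    _ = ⟪u, B v⟫ := by rw [hABv]
  -- μ is nonnegative
  have hμ0 : 0 ≤ μ := by
    rw [hμ]
    calc (0:ℝ) ≤ lam * ‖B g‖ * ‖B g‖ := by positivity
    _ ≤ ⟪A (B g), B g⟫ := hApos _
    _ = ⟪g, B g⟫ := by rw [hABv]
  have h1μ : (0:ℝ) < 1 + μ := by linarith
  set G := rankOne g with hG
  have hGapp : ∀ v, G v = ⟪g, v⟫ • g := fun v => rfl
  -- key rank-one identities
  have hGBG : G * B * G = μ • G := by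
    ext v
    simp only [ContinuousLinearMap.mul_apply, ContinuousLinearMap.smul_apply, hGapp,
      map_smul, inner_smul_right, hμ]
    rw [smul_smul, smul_smul, mul_comm]
  -- the Sherman–Morrison candidate inverse
  set c : ℝ := (1 + μ)⁻¹ with hc
  have hc1 : c * (1 + μ) = 1 := inv_mul_cancel₀ h1μ.ne'
  set C : V →L[ℝ] V := B - c • (B * G * B) with hCdef
  -- scalar-multiplication commutation facts (avoiding slow instance search)
  have smulmul : ∀ (r : ℝ) (X Y : V →L[ℝ] V), (r • X) * Y = r • (X * Y) := by
    intro r X Y; ext v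
    simp [ContinuousLinearMap.mul_apply]
  have mulsmul : ∀ (r : ℝ) (X Y : V →L[ℝ] V), X * (r • Y) = r • (X * Y) := by
    intro r X Y; ext v
    simp [ContinuousLinearMap.mul_apply]
  have h1 : (A + G) * C = 1 := by
    have e1 : A * (B * G * B) = G * B := by
      rw [show B * G * B = B * (G * B) from mul_assoc _ _ _, ← mul_assoc, hAB, one_mul]
    have e2 : G * (B * G * B) = μ • (G * B) := by
      rw [← mul_assoc, ← mul_assoc, hGBG, smulmul]
    rw [mul_sub, mulsmul, add_mul, add_mul, hAB, e1, e2, smul_add, smul_smul,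
      ← add_smul, show c + c * μ = 1 from by rw [← hc1]; ring, one_smul]
    abel
  have h2 : C * (A + G) = 1 := by
    have e1 : (B * G * B) * A = B * G := by
      rw [mul_assoc, hBA, mul_one]
    have e2 : (B * G * B) * G = μ • (B * G) := by
      rw [mul_assoc, mul_assoc, ← mul_assoc G B G, hGBG, mulsmul]
    rw [sub_mul, smulmul, mul_add, mul_add, hBA, e1, e2, smul_add, smul_smul,
      ← add_smul, show c + c * μ = 1 from by rw [← hc1]; ring, one_smul]
    abel
  have hinv : Ring.inverse (A + G) = C := by
    have : Ring.inverse ((⟨A + G, C, h1, h2⟩ : (V →L[ℝ] V)ˣ) : V →L[ℝ] V) =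
        ((⟨A + G, C, h1, h2⟩ : (V →L[ℝ] V)ˣ)⁻¹ : (V →L[ℝ] V)ˣ) :=
      Ring.inverse_unit _
    simpa using this
  -- inner product bookkeeping
  have hνζ : ⟪ζ, B g⟫ = ν := by
    rw [real_inner_comm, hBsym, ← hν]
  have hCapp : C (ζ + g) = B ζ + B g - (c * (ν + μ)) • B g := by
    rw [hCdef]
    simp only [ContinuousLinearMap.sub_apply, ContinuousLinearMap.smul_apply,
      ContinuousLinearMap.mul_apply, map_add, hGapp]
    rw [← hν, ← hμ, map_smul, map_smul, smul_smul, smul_smul, mul_add, add_smul]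
    abel
  have hval : ⟪ζ + g, (Ring.inverse (A + G)) (ζ + g)⟫ =
      ⟪ζ, B ζ⟫ + (2 * ν + μ - c * (ν + μ) ^ 2) := by
    rw [hinv, hCapp, inner_sub_right, real_inner_smul_right, inner_add_right,
      inner_add_left, inner_add_left, hνζ, ← hν, ← hμ]
    ring
  have hmain : ⟪ζ + g, (Ring.inverse (A + G)) (ζ + g)⟫ - ⟪ζ, B ζ⟫ =
      (μ + 2 * ν - ν ^ 2) / (1 + μ) := by
    rw [hval, hc]
    field_simp
    ring
  refine ⟨hmain, fun hν0 => ?_⟩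
  rw [hmain]
  rw [div_le_div_iff_of_pos_right h1μ]
  nlinarith
end

section
/- (Finite-dimensional log-determinant bound) Let n, T be positive integers, λ > 0, X > 0, and let g_1,…,g_T ∈ ℝ^n satisfy ‖g_t‖₂ ≤ X for all t. Let K_T = (⟨g_i, g_j⟩)_{i,j=1}^T ∈ ℝ^{T×T} be the Gram matrix. Then log det(I_T + λ^{-1} K_T) ≤ n · (1 + log(1 + T·X²/λ)). -/
open scoped RealInnerProductSpace

open Matrix

private lemma trace_eq_sum_eig (n : ℕ) (M : Matrix (Fin n) (Fin n) ℝ) (hM : M.IsHermitian) :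
    M.trace = ∑ i, hM.eigenvalues i := by
  simpa using hM.trace_eq_sum_eigenvalues

/-- Finite-dimensional log-determinant bound: for `g_1,…,g_T ∈ ℝ^n` with `‖g_t‖₂ ≤ X`
and Gram matrix `K_T`, `log det (I_T + λ⁻¹ K_T) ≤ n (1 + log(1 + T X²/λ))`. -/
theorem finite_dim_logdet_bound
    (n T : ℕ) (hn : 0 < n) (hT : 0 < T)
    (lam X : ℝ) (hlam : 0 < lam) (hX : 0 < X)
    (g : Fin T → EuclideanSpace ℝ (Fin n)) (hg : ∀ t, ‖g t‖ ≤ X)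
    (K : Matrix (Fin T) (Fin T) ℝ)
    (hK : ∀ i j, K i j = ⟪g i, g j⟫) :
    Real.log (1 + lam⁻¹ • K).det ≤
      (n : ℝ) * (1 + Real.log (1 + (T : ℝ) * X ^ 2 / lam)) := by
  classical
  set A : Matrix (Fin n) (Fin T) ℝ := Matrix.of fun i t => g t i with hAdef
  have hKA : K = Aᵀ * A := by
    ext i j
    rw [hK]
    simp [Matrix.mul_apply, PiLp.inner_apply, hAdef, Matrix.transpose_apply]
    exact Finset.sum_congr rfl fun _ _ => mul_comm _ _
  set M : Matrix (Fin n) (Fin n) ℝ := 1 + lam⁻¹ • (A * Aᵀ) with hMdef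
  -- determinant identity
  have hdet : (1 + lam⁻¹ • K).det = M.det := by
    rw [hKA]
    have h1 : (1 : Matrix (Fin T) (Fin T) ℝ) + lam⁻¹ • (Aᵀ * A)
        = 1 + Aᵀ * (lam⁻¹ • A) := by rw [Matrix.mul_smul]
    rw [h1, Matrix.det_one_add_mul_comm, hMdef, Matrix.smul_mul]
  -- positive semidefiniteness of lam⁻¹ • (A * Aᵀ)
  have hPSD : (lam⁻¹ • (A * Aᵀ)).PosSemidef := by
    have hB : (A * Aᴴ).PosSemidef := Matrix.posSemidef_self_mul_conjTranspose A
    have hAt : Aᴴ = Aᵀ := Matrix.conjTranspose_eq_transpose_of_trivial A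
    rw [hAt] at hB
    constructor
    · show (lam⁻¹ • (A * Aᵀ))ᴴ = lam⁻¹ • (A * Aᵀ)
      rw [Matrix.conjTranspose_smul, hB.1, star_trivial]
    · intro x
      exact (hB.smul (inv_nonneg.mpr hlam.le)).2 x
  have hM : M.PosDef := Matrix.PosDef.add_posSemidef Matrix.PosDef.one hPSD
  set μ : Fin n → ℝ := hM.isHermitian.eigenvalues with hmu
  have hμpos : ∀ i, 0 < μ i := hM.eigenvalues_pos
  -- trace bound
  have htrace : M.trace ≤ (n : ℝ) + (T : ℝ) * X ^ 2 / lam := by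
    have h2 : (A * Aᵀ).trace ≤ (T : ℝ) * X ^ 2 := by
      have hAA : (A * Aᵀ).trace = ∑ t, ⟪g t, g t⟫ := by
        simp only [Matrix.trace, Matrix.diag_apply, Matrix.mul_apply, Matrix.transpose_apply]
        rw [Finset.sum_comm]
        refine Finset.sum_congr rfl fun t _ => ?_
        simp [PiLp.inner_apply, hAdef]
        rw [EuclideanSpace.norm_eq, Real.sq_sqrt (by positivity)]
        simp [Real.norm_eq_abs, sq]
      rw [hAA]
      calc ∑ t, ⟪g t, g t⟫ ≤ ∑ _t : Fin T, X ^ 2 := by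
            refine Finset.sum_le_sum fun t _ => ?_
            rw [real_inner_self_eq_norm_sq]
            exact pow_le_pow_left₀ (norm_nonneg _) (hg t) 2
        _ = (T : ℝ) * X ^ 2 := by simp [mul_comm]
    have : M.trace = (n : ℝ) + lam⁻¹ * (A * Aᵀ).trace := by
      simp [hMdef, Matrix.trace_add, Matrix.trace_smul, smul_eq_mul]
    rw [this, div_eq_inv_mul]
    have hinv : 0 ≤ lam⁻¹ := le_of_lt (inv_pos.mpr hlam)
    nlinarith
  -- eigenvalue decomposition facts
  have hdet2 : M.det = ∏ i, μ i := by
    have := hM.isHermitian.det_eq_prod_eigenvalues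
    simpa using this
  have htr2 : M.trace = ∑ i, μ i := trace_eq_sum_eig n M hM.isHermitian
  set c : ℝ := 1 + (T : ℝ) * X ^ 2 / lam with hc
  have hc1 : 1 ≤ c := by
    rw [hc]
    have h0 : 0 ≤ (T : ℝ) * X ^ 2 / lam := by positivity
    linarith
  have hc0 : 0 < c := lt_of_lt_of_le one_pos hc1
  -- tangent line bound
  have hlog : ∀ i, Real.log (μ i) ≤ μ i / c + (Real.log c - 1) := by
    intro i
    have h := Real.log_le_sub_one_of_pos (div_pos (hμpos i) hc0)
    rw [Real.log_div (ne_of_gt (hμpos i)) (ne_of_gt hc0)] at h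
    linarith
  rw [hdet, hdet2, Real.log_prod (fun i _ => ne_of_gt (hμpos i))]
  have hsum : ∑ i, Real.log (μ i) ≤ (∑ i, μ i) / c + (n : ℝ) * (Real.log c - 1) := by
    calc ∑ i, Real.log (μ i) ≤ ∑ i, (μ i / c + (Real.log c - 1)) :=
          Finset.sum_le_sum fun i _ => hlog i
      _ = (∑ i, μ i) / c + (n : ℝ) * (Real.log c - 1) := by
          rw [Finset.sum_add_distrib, ← Finset.sum_div]
          simp [mul_comm]
          ring
  have htr3 : (∑ i, μ i) ≤ (n : ℝ) + (c - 1) := by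
    rw [← htr2]; simpa [hc] using htrace
  have hdivle : (∑ i, μ i) / c ≤ 2 * (n : ℝ) := by
    rw [div_le_iff₀ hc0]
    have hn1 : (1 : ℝ) ≤ (n : ℝ) := by exact_mod_cast hn
    nlinarith
  have hn1 : (1 : ℝ) ≤ (n : ℝ) := by exact_mod_cast hn
  calc ∑ i, Real.log (μ i) ≤ (∑ i, μ i) / c + (n : ℝ) * (Real.log c - 1) := hsum
    _ ≤ (n : ℝ) * (1 + Real.log c) := by nlinarith
end
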